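/- Let 𝒱 be a spraid and let f be a trail morphism from 𝒱 to σ_ℝ. Then there is a refinement morphism g from 𝒱 to σ_ℝ such that f(x) ≡_ℝ g(x) for all points x of 𝒱. -/

import Mathlib

/-! # Natural Topology: basic framework (Waaldijk) -/

/-- A pre-natural space: a countable set of basic dots with a decidable
pre-apartness `apart` and a decidable refinement partial order `refines`. -/
structure PreNaturalSpace (V : Type) : Type where
  countable' : Countable V
  apart : V → V → Prop
  refines : V → V → Prop
  apart_dec : DecidableRel apart
  refines_dec : DecidableRel refines
  apart_symm : ∀ a b, apart a b → apart b a
  apart_irrefl : ∀ a, ¬ apart a a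
  apart_mono : ∀ a b c, refines a b → apart c b → apart c a
  refines_refl : ∀ a, refines a a
  refines_trans : ∀ a b c, refines a b → refines b c → refines a c
  refines_antisymm : ∀ a b, refines a b → refines b a → a = b

namespace PreNaturalSpace

variable {V W : Type}

/-- `a ≺ b` : strict refinement. -/
def strict (P : PreNaturalSpace V) (a b : V) : Prop := P.refines a b ∧ a ≠ b

/-- A point is a shrinking sequence of dots deciding every apart pair of dots. -/
structure IsPoint (P : PreNaturalSpace V) (p : ℕ → V) : Prop where
  mono : ∀ n, P.refines (p (n + 1)) (p n)
  shrink : ∀ n, ∃ m, P.strict (p m) (p n)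
  decides : ∀ a b, P.apart a b → ∃ m, P.apart (p m) a ∨ P.apart (p m) b

/-- The set of points of a pre-natural space. -/
def Pt (P : PreNaturalSpace V) : Type := { p : ℕ → V // P.IsPoint p }

/-- `p` begins with the dot `a` : some `p m ≺ a`. -/
def begins (P : PreNaturalSpace V) (p : ℕ → V) (a : V) : Prop := ∃ m, P.strict (p m) a

/-- Apartness between a dot and a point. -/
def dApart (P : PreNaturalSpace V) (a : V) (p : ℕ → V) : Prop := ∃ m, P.apart (p m) a

/-- Apartness between points. -/
def pApart (P : PreNaturalSpace V) (p q : P.Pt) : Prop := ∃ n, P.apart (p.1 n) (q.1 n)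

/-- Equivalence of points: the negation of apartness. -/
def pEquiv (P : PreNaturalSpace V) (p q : P.Pt) : Prop := ¬ P.pApart p q

variable (P : PreNaturalSpace V)

lemma refines_of_le {p : ℕ → V} (hp : ∀ n, P.refines (p (n + 1)) (p n)) :
    ∀ {m k : ℕ}, m ≤ k → P.refines (p k) (p m) := by
  intro m k h
  induction h with
  | refl => exact P.refines_refl _
  | step h ih => exact P.refines_trans _ _ _ (hp _) ih

lemma begins_mono {z : ℕ → V} (hz : P.IsPoint z) {a b : V} (hab : P.refines a b)
    (h : P.begins z a) : P.begins z b := by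
  obtain ⟨j, hj1, hj2⟩ := h
  have hzb : P.refines (z j) b := P.refines_trans _ _ _ hj1 hab
  by_cases he : z j = b
  · obtain ⟨i, hi1, hi2⟩ := hz.shrink j
    exact ⟨i, P.refines_trans _ _ _ hi1 hzb, fun h' => hi2 (h'.trans he.symm)⟩
  · exact ⟨j, hzb, he⟩

/-- The natural (apartness) topology as a predicate on subsets of the point set. -/
def NatOpen (U : Set P.Pt) : Prop :=
  ∀ x ∈ U, ∀ y : P.Pt, P.pApart y x ∨ ∃ m, { z : P.Pt | P.begins z.1 (y.1 m) } ⊆ U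

instance instTopPt : TopologicalSpace P.Pt where
  IsOpen := P.NatOpen
  isOpen_univ := fun _ _ _ => Or.inr ⟨0, fun _ _ => trivial⟩
  isOpen_inter := by
    intro U U' hU hU' x hx y
    rcases hU x hx.1 y with h | ⟨m, hm⟩
    · exact Or.inl h
    rcases hU' x hx.2 y with h | ⟨k, hk⟩
    · exact Or.inl h
    refine Or.inr ⟨max m k, fun z hz => ⟨hm ?_, hk ?_⟩⟩
    · exact P.begins_mono z.2 (P.refines_of_le y.2.mono (le_max_left m k)) hz
    · exact P.begins_mono z.2 (P.refines_of_le y.2.mono (le_max_right m k)) hz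
  isOpen_sUnion := by
    intro S hS x hx y
    obtain ⟨U, hU, hxU⟩ := hx
    rcases hS U hU x hxU y with h | ⟨m, hm⟩
    · exact Or.inl h
    · exact Or.inr ⟨m, fun z hz => ⟨U, hU, hm hz⟩⟩

lemma pEquiv_refl (p : P.Pt) : P.pEquiv p p := fun ⟨_, h⟩ => P.apart_irrefl _ h

lemma pEquiv_symm {p q : P.Pt} (h : P.pEquiv p q) : P.pEquiv q p :=
  fun ⟨n, hn⟩ => h ⟨n, P.apart_symm _ _ hn⟩

lemma pEquiv_trans {p q r : P.Pt} (hpq : P.pEquiv p q) (hqr : P.pEquiv q r) :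
    P.pEquiv p r := by
  rintro ⟨n, hn⟩
  obtain ⟨m, hm⟩ := q.2.decides (p.1 n) (r.1 n) hn
  rcases hm with hm | hm
  · -- q.1 m apart from p.1 n
    refine hpq ⟨max m n, ?_⟩
    have h1 : P.apart (p.1 n) (q.1 (max m n)) :=
      P.apart_mono _ _ _ (P.refines_of_le q.2.mono (le_max_left m n)) (P.apart_symm _ _ hm)
    have h2 : P.apart (q.1 (max m n)) (p.1 (max m n)) :=
      P.apart_mono _ _ _ (P.refines_of_le p.2.mono (le_max_right m n)) (P.apart_symm _ _ h1)
    exact P.apart_symm _ _ h2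
  · refine hqr ⟨max m n, ?_⟩
    have h1 : P.apart (r.1 n) (q.1 (max m n)) :=
      P.apart_mono _ _ _ (P.refines_of_le q.2.mono (le_max_left m n)) (P.apart_symm _ _ hm)
    exact P.apart_mono _ _ _ (P.refines_of_le r.2.mono (le_max_right m n))
      (P.apart_symm _ _ h1)

/-- The setoid of points modulo `≡`. -/
def ptSetoid : Setoid P.Pt :=
  ⟨P.pEquiv, ⟨P.pEquiv_refl, P.pEquiv_symm, P.pEquiv_trans⟩⟩

/-- `â` : the set of points beginning with the dot `a`. -/
def hatSet (a : V) : Set P.Pt := { p | P.begins p.1 a }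

/-- `ā` : the `≡`-closure of `â`. -/
def barSet (a : V) : Set P.Pt := { p | ∃ q : P.Pt, P.begins q.1 a ∧ P.pEquiv p q }

/-- A natural space is basic-open when every `ā` is open. -/
def BasicOpen : Prop := ∀ a : V, IsOpen (P.barSet a)

/-- Existence of a maximal dot. -/
def HasMaxDot : Prop := ∃ m, ∀ a, P.refines a m

/-- Every basic dot begins at least one point. -/
def AllDotsInhabited : Prop := ∀ a : V, ∃ p : ℕ → V, P.IsPoint p ∧ P.begins p a

/-- The conditions making the point set of a pre-natural space a natural space. -/
def IsNaturalSpace : Prop := P.HasMaxDot ∧ P.AllDotsInhabited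

end PreNaturalSpace

/-- A refinement morphism between (pre-)natural spaces: a map on dots sending
points to points and reflecting apartness of points. -/
structure RefMorphism {V W : Type} (P : PreNaturalSpace V) (Q : PreNaturalSpace W) : Type where
  toFun : V → W
  maps_points : ∀ p : ℕ → V, P.IsPoint p → Q.IsPoint (fun n => toFun (p n))
  reflects_apart : ∀ p q : ℕ → V, P.IsPoint p → P.IsPoint q →
    (∃ n, Q.apart (toFun (p n)) (toFun (q n))) → ∃ n, P.apart (p n) (q n)

/-- The induced map on points of a refinement morphism. -/
def RefMorphism.pointMap {V W : Type} {P : PreNaturalSpace V} {Q : PreNaturalSpace W}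
    (f : RefMorphism P Q) (p : P.Pt) : Q.Pt :=
  ⟨fun n => f.toFun (p.1 n), f.maps_points p.1 p.2⟩

namespace PreNaturalSpace

variable {V W : Type} (P : PreNaturalSpace V)

/-- Restriction of a pre-natural space to a subset of dots. -/
noncomputable def restrict (S : Set V) : PreNaturalSpace S where
  countable' := by haveI := P.countable'; exact inferInstance
  apart a b := P.apart a.1 b.1
  refines a b := P.refines a.1 b.1
  apart_dec := Classical.decRel _
  refines_dec := Classical.decRel _
  apart_symm _ _ h := P.apart_symm _ _ h
  apart_irrefl a := P.apart_irrefl a.1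
  apart_mono _ _ _ h1 h2 := P.apart_mono _ _ _ h1 h2
  refines_refl a := P.refines_refl a.1
  refines_trans _ _ _ h1 h2 := P.refines_trans _ _ _ h1 h2
  refines_antisymm _ _ h1 h2 := Subtype.ext (P.refines_antisymm _ _ h1 h2)

/-! ## Trail spaces -/

/-- A `≺`-trail: a finite strictly refining sequence `a₀ ≻ a₁ ≻ …`. -/
def Trail : Type := { l : List V // l.Chain' fun a b => P.strict b a }

lemma strict_trans_flip : Transitive (fun a b : V => P.strict b a) := by
  rintro a b c ⟨h1, h1'⟩ ⟨h2, h2'⟩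
  refine ⟨P.refines_trans _ _ _ h2 h1, fun he => ?_⟩
  exact h2' (P.refines_antisymm _ _ h2 (he ▸ h1))

lemma last_refines_of_prefix {a b : List V}
    (ha : a.Chain' fun x y => P.strict y x) (hpre : b <+: a)
    {x y : V} (hx : x ∈ a.getLast?) (hy : y ∈ b.getLast?) :
    P.refines x y := by
  haveI : IsTrans V (fun x y : V => P.strict y x) := ⟨fun _ _ _ h1 h2 => P.strict_trans_flip h1 h2⟩
  have hpw : a.Pairwise fun x y => P.strict y x := List.isChain_iff_pairwise.mp ha
  obtain ⟨t, rfl⟩ := hpre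
  rcases eq_or_ne t [] with rfl | ht
  · rw [List.append_nil] at hx
    have : x = y := by
      rw [Option.mem_def] at hx hy
      exact Option.some_injective _ (hx ▸ hy ▸ rfl)
    exact this ▸ P.refines_refl x
  · rw [List.getLast?_append_of_ne_nil _ ht] at hx
    have hxt : x ∈ t := List.mem_of_mem_getLast? hx
    have hyb : y ∈ b := List.mem_of_mem_getLast? hy
    have := (List.pairwise_append.mp hpw).2.2 y hyb x hxt
    exact this.1

/-- The trail space of a pre-natural space: dots are `≺`-trails, with
`a ⊑* b` iff `b` is an initial segment of `a`, and `a #* b` iff the last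
dots of `a` and `b` are apart. -/
noncomputable def trailSpace : PreNaturalSpace P.Trail where
  countable' := by haveI := P.countable'; exact inferInstanceAs (Countable
    { l : List V // l.Chain' fun a b => P.strict b a })
  apart a b := ∃ x ∈ a.1.getLast?, ∃ y ∈ b.1.getLast?, P.apart x y
  refines a b := b.1 <+: a.1
  apart_dec := Classical.decRel _
  refines_dec := Classical.decRel _
  apart_symm := by
    rintro a b ⟨x, hx, y, hy, hxy⟩
    exact ⟨y, hy, x, hx, P.apart_symm _ _ hxy⟩
  apart_irrefl := by
    rintro a ⟨x, hx, y, hy, hxy⟩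
    rw [Option.mem_def] at hx hy
    have : x = y := Option.some_injective _ (hx ▸ hy ▸ rfl)
    exact P.apart_irrefl x (this ▸ hxy)
  apart_mono := by
    rintro a b c hab ⟨x, hx, y, hy, hxy⟩
    have hbne : b.1 ≠ [] := by
      intro h
      rw [h] at hy
      simp at hy
    have hane : a.1 ≠ [] := by
      intro h
      exact hbne (List.prefix_nil.mp (h ▸ hab))
    obtain ⟨z, hz⟩ : ∃ z, z ∈ a.1.getLast? := by
      rcases h : a.1.getLast? with _ | z
      · exact absurd (List.getLast?_eq_none_iff.mp h) hane
      · exact ⟨z, rfl⟩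
    have hzy : P.refines z y := P.last_refines_of_prefix a.2 hab hz hy
    exact ⟨x, hx, z, hz, P.apart_mono _ _ _ hzy hxy⟩
  refines_refl a := List.prefix_refl a.1
  refines_trans _ _ _ h1 h2 := h2.trans h1
  refines_antisymm a b h1 h2 :=
    Subtype.ext (h2.eq_of_length (le_antisymm h2.length_le h1.length_le))

end PreNaturalSpace

open Classical in
/-- `p♯(n)` : the `≺`-trail obtained from `p₀, …, p_{n-1}` by deleting repetitions
(for a shrinking sequence `p`, repetitions are consecutive). -/
noncomputable def segList {V : Type} (p : ℕ → V) : ℕ → List V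
  | 0 => []
  | n + 1 =>
    if (segList p n).getLast? = some (p n) then segList p n
    else segList p n ++ [p n]

namespace PreNaturalSpace

variable {V W : Type} (P : PreNaturalSpace V)

/-- The map on trail dots sending a nonempty trail to its last element and
the empty trail to `m`. -/
def lastDot (m : V) (q : P.Trail) : V := q.1.getLast?.getD m

/-- `g` is the point map induced by a trail morphism `f` (a refinement morphism
on the trail space): `g p = f (p♯(0)), f (p♯(1)), …`. -/
def InducedByTrailMorphism (Q : PreNaturalSpace W) (f : RefMorphism P.trailSpace Q)
    (g : P.Pt → Q.Pt) : Prop :=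
  ∀ p : P.Pt, ∃ t : P.trailSpace.Pt, (∀ n, (t.1 n).1 = segList p.1 n) ∧ g p = f.pointMap t

/-- `g` is a natural morphism map: induced by a refinement morphism or by a trail morphism. -/
def IsNaturalMorphismMap (Q : PreNaturalSpace W) (g : P.Pt → Q.Pt) : Prop :=
  (∃ f : RefMorphism P Q, ∀ p, g p = f.pointMap p) ∨
  (∃ f : RefMorphism P.trailSpace Q, P.InducedByTrailMorphism Q f g)

/-- Two natural spaces are isomorphic: natural morphisms both ways, inverse up to `≡`. -/
def AreIsomorphic (Q : PreNaturalSpace W) : Prop :=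
  ∃ (f : P.Pt → Q.Pt) (g : Q.Pt → P.Pt),
    P.IsNaturalMorphismMap Q f ∧ Q.IsNaturalMorphismMap P g ∧
    (∀ x, P.pEquiv (g (f x)) x) ∧ (∀ y, Q.pEquiv (f (g y)) y)

/-- A natural space is a basic neighborhood space iff it is isomorphic to a basic-open space. -/
def IsBasicNbhdSpace : Prop :=
  ∃ (W' : Type) (Q : PreNaturalSpace W'), Q.IsNaturalSpace ∧ Q.BasicOpen ∧ P.AreIsomorphic Q

/-! ## Trees, treas, spreads, spraids, fans -/

/-- `a` is a successor of `c`. -/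
def IsSucc (a c : V) : Prop := P.strict a c ∧ ∀ b, P.strict a b → P.refines b c → b = c

/-- A successor-trail (as a list, each entry a successor of the previous one). -/
def SuccChain (l : List V) : Prop := l.Chain' fun x y => P.IsSucc y x

/-- A successor-trail from `m` to `a`. -/
def IsSuccTrailFromTo (m a : V) (l : List V) : Prop :=
  P.SuccChain l ∧ l.head? = some m ∧ l.getLast? = some a

/-- `(V,⊑)` is a tree. -/
def IsTree : Prop :=
  ∃ m, (∀ a, P.refines a m) ∧ ∀ a, ∃! l : List V, P.IsSuccTrailFromTo m a l

/-- `(V,⊑)` is a trea. -/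
def IsTrea : Prop :=
  ∃ m, (∀ a, P.refines a m) ∧ (∀ a, { b | P.refines a b }.Finite) ∧
    ∀ a, ∃ g : ℕ, ∀ l : List V, P.IsSuccTrailFromTo m a l → l.length = g

/-- Every infinite successor-trail is a point. -/
def SuccTrailsArePoints : Prop :=
  ∀ q : ℕ → V, (∀ n, P.IsSucc (q (n + 1)) (q n)) → P.IsPoint q

def IsSpread : Prop := P.IsTree ∧ P.SuccTrailsArePoints

def IsSpraid : Prop := P.IsTrea ∧ P.SuccTrailsArePoints

/-- Finitely branching: every dot has finitely many successors. -/
def FinBranching : Prop := ∀ a : V, { b | P.IsSucc b a }.Finite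

def IsFan : Prop := P.IsSpread ∧ P.FinBranching

def IsFann : Prop := P.IsSpraid ∧ P.FinBranching

end PreNaturalSpace
/-! ## The natural real numbers and the lean dyadic spraid σ_ℝ -/

/-- Basic dots for the natural reals: `none` is the maximal dot `(-∞,∞)`,
`some ⟨(p,q), _⟩` is the closed rational interval `[p,q]` with `p < q`. -/
def RDot : Type := Option { pq : ℚ × ℚ // pq.1 < pq.2 }

/-- Apartness of rational intervals: a positive gap. -/
def rApart : RDot → RDot → Prop
  | some a, some b => b.1.2 < a.1.1 ∨ a.1.2 < b.1.1
  | _, _ => False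

/-- Refinement of rational intervals: containment of closed intervals. -/
def rRefines : RDot → RDot → Prop
  | _, none => True
  | none, some _ => False
  | some a, some b => b.1.1 ≤ a.1.1 ∧ a.1.2 ≤ b.1.2

/-- The pre-natural space of the natural real numbers. -/
noncomputable def RPre : PreNaturalSpace RDot where
  countable' := by unfold RDot; infer_instance
  apart := rApart
  refines := rRefines
  apart_dec := Classical.decRel _
  refines_dec := Classical.decRel _
  apart_symm := by
    rintro (_ | a) (_ | b) h <;> simp [rApart] at h ⊢ <;> tauto
  apart_irrefl := by
    rintro (_ | a) h
    · exact h
    · simp only [rApart] at h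
      rcases h with h | h <;> exact absurd a.2 (not_lt.mpr h.le)
  apart_mono := by
    rintro (_ | a) (_ | b) (_ | c) hab hcb <;>
      simp [rApart, rRefines] at hab hcb ⊢
    rcases hcb with h | h
    · exact Or.inl (lt_of_le_of_lt hab.2 h)
    · exact Or.inr (lt_of_lt_of_le h hab.1)
  refines_refl := by rintro (_ | a) <;> simp [rRefines]
  refines_trans := by
    rintro (_ | a) (_ | b) (_ | c) h1 h2 <;> simp [rRefines] at h1 h2 ⊢
    exact ⟨le_trans h2.1 h1.1, le_trans h1.2 h2.2⟩
  refines_antisymm := by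
    rintro (_ | a) (_ | b) h1 h2 <;> simp [rRefines] at h1 h2 ⊢ <;> try rfl
    have : a.1 = b.1 := Prod.ext (le_antisymm h2.1 h1.1) (le_antisymm h1.2 h2.2)
    exact congrArg some (Subtype.ext this)

lemma dyadic_lt (n : ℤ) (m : ℕ) : (n : ℚ) / 2 ^ m < ((n : ℚ) + 2) / 2 ^ m := by
  have h2 : (0 : ℚ) < 2 ^ m := by positivity
  rw [div_lt_div_iff_of_pos_right h2]
  linarith

/-- The lean dyadic interval `[n/2^m, (n+2)/2^m]` as a dot of the natural reals. -/
def leanIv (n : ℤ) (m : ℕ) : RDot :=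
  some ⟨((n : ℚ) / 2 ^ m, ((n : ℚ) + 2) / 2 ^ m), dyadic_lt n m⟩

/-- The basic dots of `σ_ℝ` : the maximal dot together with the lean dyadic intervals. -/
def IsLeanDyadic : Set RDot := { d | d = none ∨ ∃ (n : ℤ) (m : ℕ), d = leanIv n m }

/-- The spraid `σ_ℝ` of lean dyadic intervals, with the apartness and refinement
of the natural reals. -/
noncomputable def SigPre : PreNaturalSpace IsLeanDyadic := RPre.restrict IsLeanDyadic

/-- The unique real number represented by a natural real: the supremum of the
left endpoints of its intervals. -/
noncomputable def rhoR (x : RPre.Pt) : ℝ :=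
  sSup { r : ℝ | ∃ (n : ℕ) (pq : { pq : ℚ × ℚ // pq.1 < pq.2 }),
    x.1 n = some pq ∧ r = (pq.1.1 : ℝ) }

/-- The unique real number represented by a point of `σ_ℝ`. -/
noncomputable def rhoSig (x : SigPre.Pt) : ℝ :=
  sSup { r : ℝ | ∃ (n : ℕ) (pq : { pq : ℚ × ℚ // pq.1 < pq.2 }),
    (x.1 n).1 = some pq ∧ r = (pq.1.1 : ℝ) }


namespace NTG


noncomputable section
open Classical

/-- `x` is a dyadic number with denominator `2^m`. -/
def isDy (m : ℕ) (x : ℝ) : Prop := ∃ j : ℤ, x * 2 ^ m = (j : ℝ)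

lemma isDy_mono {m m' : ℕ} (h : m ≤ m') {x : ℝ} : isDy m x → isDy m' x := by
  rintro ⟨j, hj⟩
  refine ⟨j * 2 ^ (m' - m), ?_⟩
  have : (2:ℝ) ^ m' = 2 ^ m * 2 ^ (m' - m) := by
    rw [← pow_add]; congr 1; omega
  rw [this, ← mul_assoc, hj]; push_cast; ring

/-- interval `[u,v]` contains two consecutive points of the `2^{-m}` grid. -/
def Bad (u v : ℝ) (m : ℕ) : Prop :=
  ∃ j : ℤ, u * 2 ^ m ≤ (j : ℝ) ∧ (j : ℝ) + 1 ≤ v * 2 ^ m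

/-- The guard for the hull construction. -/
structure Good (u v : ℝ) : Prop where
  hlt : u < v
  hsm : v - u ≤ 1 / 32

lemma bad_succ {u v : ℝ} {m : ℕ} (h : Bad u v m) : Bad u v (m + 1) := by
  obtain ⟨j, h1, h2⟩ := h
  refine ⟨2 * j, ?_, ?_⟩
  · rw [pow_succ]
    push_cast
    nlinarith
  · rw [pow_succ]
    push_cast
    nlinarith

lemma bad_mono {u v : ℝ} {m m' : ℕ} (h : m ≤ m') (hb : Bad u v m) : Bad u v m' := by
  induction h with
  | refl => exact hb
  | step _ ih => exact bad_succ ih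

lemma bad_exists {u v : ℝ} (h : Good u v) : ∃ m, Bad u v m := by
  obtain ⟨m, hm⟩ := pow_unbounded_of_one_lt (2 / (v - u)) (by norm_num : (1:ℝ) < 2)
  have hvu : (0:ℝ) < v - u := sub_pos.mpr h.hlt
  refine ⟨m, ⌈u * 2 ^ m⌉, Int.le_ceil _, ?_⟩
  have h1 : (⌈u * 2 ^ m⌉ : ℝ) < u * 2 ^ m + 1 := Int.ceil_lt_add_one _
  have h2 : 2 < (v - u) * 2 ^ m := by
    rw [div_lt_iff₀ hvu] at hm
    nlinarith [pow_pos (by norm_num : (0:ℝ) < 2) m]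
  nlinarith

variable {u v : ℝ}

/-- scale at which the interval is no longer "one grid point wide". -/
def NN (h : Good u v) : ℕ := Nat.find (bad_exists h)

lemma not_bad_zero (h : Good u v) : ¬ Bad u v 0 := by
  rintro ⟨j, h1, h2⟩
  simp only [pow_zero, mul_one] at h1 h2
  have := h.hsm
  linarith

lemma NN_pos (h : Good u v) : 0 < NN h := by
  rcases Nat.eq_zero_or_pos (NN h) with h0 | h0
  · exact absurd (h0 ▸ Nat.find_spec (bad_exists h)) (not_bad_zero h)
  · exact h0

/-- `m* `: the largest scale with at most one grid point in the interval. -/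
def ms (h : Good u v) : ℕ := NN h - 1

lemma bad_ms_succ (h : Good u v) : Bad u v (ms h + 1) := by
  have : ms h + 1 = NN h := by have := NN_pos h; unfold ms; omega
  exact this ▸ Nat.find_spec (bad_exists h)

lemma not_bad_ms (h : Good u v) : ¬ Bad u v (ms h) := by
  apply Nat.find_min (bad_exists h)
  have := NN_pos h; unfold ms NN at *; omega

/-- a chosen witness for `Bad (ms+1)`. -/
def j0 (h : Good u v) : ℤ := Classical.choose (bad_ms_succ h)

lemma j0_spec (h : Good u v) :
    u * 2 ^ (ms h + 1) ≤ (j0 h : ℝ) ∧ (j0 h : ℝ) + 1 ≤ v * 2 ^ (ms h + 1) :=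
  Classical.choose_spec (bad_ms_succ h)

/-- the even one among `j0, j0+1`. -/
def j1 (h : Good u v) : ℤ := if Even (j0 h) then j0 h else j0 h + 1

lemma j1_even (h : Good u v) : Even (j1 h) := by
  unfold j1; split_ifs with he
  · exact he
  · rcases Int.even_or_odd (j0 h) with h' | h'
    · exact absurd h' he
    · exact Odd.add_one h'

lemma j1_spec (h : Good u v) :
    u * 2 ^ (ms h + 1) ≤ (j1 h : ℝ) ∧ (j1 h : ℝ) ≤ v * 2 ^ (ms h + 1) := by
  obtain ⟨h1, h2⟩ := j0_spec h
  unfold j1; split_ifs <;> constructor <;> push_cast <;> linarith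

/-- `d` : the unique `2^{-m*}`-grid point in the interval. -/
def dd (h : Good u v) : ℝ := (j1 h : ℝ) / 2 ^ (ms h + 1)

lemma two_pow_pos (m : ℕ) : (0:ℝ) < 2 ^ m := pow_pos (by norm_num) m

lemma dd_mem (h : Good u v) : u ≤ dd h ∧ dd h ≤ v := by
  obtain ⟨h1, h2⟩ := j1_spec h
  have hp := two_pow_pos (ms h + 1)
  unfold dd
  constructor
  · rw [le_div_iff₀ hp]; exact h1
  · rw [div_le_iff₀ hp]; exact h2

lemma dd_dy (h : Good u v) : isDy (ms h) (dd h) := by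
  obtain ⟨k, hk⟩ := j1_even h
  refine ⟨k, ?_⟩
  have hp : (2:ℝ) ^ (ms h + 1) ≠ 0 := ne_of_gt (two_pow_pos _)
  unfold dd
  rw [div_mul_eq_mul_div, pow_succ]
  rw [div_eq_iff (by positivity)]
  push_cast [hk]
  ring

/-- uniqueness of the grid point at scale `m*`. -/
lemma dy_mem_unique (h : Good u v) {x y : ℝ} (hx : isDy (ms h) x) (hy : isDy (ms h) y)
    (hxm : u ≤ x ∧ x ≤ v) (hym : u ≤ y ∧ y ≤ v) : x = y := by
  by_contra hne
  obtain ⟨jx, hjx⟩ := hx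
  obtain ⟨jy, hjy⟩ := hy
  have hp := two_pow_pos (ms h)
  have key : ∀ a b : ℤ, a < b → (∀ xx yy : ℝ, xx * 2 ^ ms h = a → yy * 2 ^ ms h = b →
      u ≤ xx → yy ≤ v → False) := by
    intro a b hab xx yy hxx hyy h1 h2
    apply not_bad_ms h
    refine ⟨a, ?_, ?_⟩
    · rw [← hxx]; nlinarith
    · have h3 : (a:ℝ) + 1 ≤ b := by exact_mod_cast hab
      rw [← hyy] at h3
      nlinarith
  have hjne : jx ≠ jy := by
    intro he
    apply hne
    have : x * 2 ^ ms h = y * 2 ^ ms h := by rw [hjx, hjy, he]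
    exact mul_right_cancel₀ (ne_of_gt hp) this
  rcases lt_or_gt_of_ne hjne with hl | hl
  · exact key jx jy hl x y hjx hjy hxm.1 hym.2
  · exact key jy jx hl y x hjy hjx hym.1 hxm.2
/-- the "radius" of the interval around `d`. -/
def rr (h : Good u v) : ℝ := max (v - dd h) (dd h - u)

lemma rr_pos (h : Good u v) : 0 < rr h := by
  have h1 := h.hlt
  have : (v - u) / 2 ≤ rr h := by
    unfold rr
    rcases le_total (v - dd h) (dd h - u) with hc | hc
    · rw [max_eq_right hc]; linarith
    · rw [max_eq_left hc]; linarith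
  linarith

lemma rr_le (h : Good u v) : rr h ≤ v - u := by
  obtain ⟨h1, h2⟩ := dd_mem h
  unfold rr
  apply max_le <;> linarith

lemma mem_ball (h : Good u v) : dd h - rr h ≤ u ∧ v ≤ dd h + rr h := by
  constructor
  · have : dd h - u ≤ rr h := le_max_right _ _
    linarith
  · have : v - dd h ≤ rr h := le_max_left _ _
    linarith

/-- the neighbouring grid points at scale `m*` are outside the interval. -/
lemma rr_lt (h : Good u v) : rr h < 1 / 2 ^ ms h := by
  obtain ⟨k, hk⟩ := dd_dy h
  have hp := two_pow_pos (ms h)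
  obtain ⟨hu, hv⟩ := dd_mem h
  have hv' : v < dd h + 1 / 2 ^ ms h := by
    by_contra hc
    push_neg at hc
    apply not_bad_ms h
    refine ⟨k, by rw [← hk]; nlinarith, ?_⟩
    rw [← hk]
    have : (dd h + 1 / 2 ^ ms h) * 2 ^ ms h = dd h * 2 ^ ms h + 1 := by
      field_simp
    nlinarith
  have hu' : dd h - 1 / 2 ^ ms h < u := by
    by_contra hc
    push_neg at hc
    apply not_bad_ms h
    refine ⟨k - 1, ?_, ?_⟩
    · push_cast
      rw [← hk]
      have : (dd h - 1 / 2 ^ ms h) * 2 ^ ms h = dd h * 2 ^ ms h - 1 := by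
        field_simp
      nlinarith
    · push_cast
      rw [← hk]
      nlinarith
  unfold rr
  apply max_lt <;> linarith

/-- minimal denominator exponent for `d`. -/
def ssEx (h : Good u v) : ∃ t : ℕ, isDy t (dd h) := ⟨ms h, dd_dy h⟩

def ss (h : Good u v) : ℕ := Nat.find (ssEx h)

lemma ss_dy (h : Good u v) : isDy (ss h) (dd h) := Nat.find_spec (ssEx h)

lemma ss_le_ms (h : Good u v) : ss h ≤ ms h := Nat.find_le (dd_dy h)

/-- `Fail t` : the ball of radius `2^{-t}` around `d` no longer contains the interval
with a factor 2 to spare. -/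
def Fail (h : Good u v) (t : ℕ) : Prop := 1 < 2 ^ t * (2 * rr h)

lemma fail_mono (h : Good u v) {t t' : ℕ} (htt : t ≤ t') (hf : Fail h t) : Fail h t' := by
  unfold Fail at *
  have h1 : (2:ℝ) ^ t ≤ 2 ^ t' := pow_le_pow_right₀ (by norm_num) htt
  nlinarith [rr_pos h]

lemma failEx (h : Good u v) : ∃ t, Fail h t := by
  obtain ⟨t, ht⟩ := pow_unbounded_of_one_lt (1 / (2 * rr h)) (by norm_num : (1:ℝ) < 2)
  refine ⟨t, ?_⟩
  unfold Fail
  have h0 : (0:ℝ) < 2 * rr h := by linarith [rr_pos h]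
  rw [div_lt_iff₀ h0] at ht
  nlinarith

def NF (h : Good u v) : ℕ := Nat.find (failEx h)

lemma not_fail_zero (h : Good u v) : ¬ Fail h 0 := by
  unfold Fail
  push_neg
  have h1 := rr_le h
  have h2 := h.hsm
  norm_num
  linarith

lemma NF_pos (h : Good u v) : 0 < NF h := by
  rcases Nat.eq_zero_or_pos (NF h) with h0 | h0
  · exact absurd (h0 ▸ Nat.find_spec (failEx h)) (not_fail_zero h)
  · exact h0

/-- the scale with `2 rr ≤ 2^{-tr}`, maximal such. -/
def tr (h : Good u v) : ℕ := NF h - 1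

lemma tr_spec (h : Good u v) : 2 ^ tr h * (2 * rr h) ≤ 1 := by
  have : ¬ Fail h (tr h) := by
    apply Nat.find_min (failEx h)
    have := NF_pos h; unfold tr NF at *; omega
  unfold Fail at this
  linarith [not_lt.mp this]

lemma tr_spec' (h : Good u v) : 1 < 2 ^ (tr h + 1) * (2 * rr h) := by
  have : tr h + 1 = NF h := by have := NF_pos h; unfold tr; omega
  exact this ▸ Nat.find_spec (failEx h)

/-- the final scale. -/
def TT (h : Good u v) : ℕ := max (ss h) (tr h)

/-- the final radius. -/
def rad (h : Good u v) : ℝ := 1 / 2 ^ TT h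

lemma rad_pos (h : Good u v) : 0 < rad h := by
  unfold rad; positivity

/-- The chosen ball contains the interval. -/
lemma rr_le_rad (h : Good u v) : rr h ≤ rad h := by
  unfold rad TT
  rcases le_total (ss h) (tr h) with hc | hc
  · rw [max_eq_right hc]
    have := tr_spec h
    have hp := two_pow_pos (tr h)
    rw [le_div_iff₀ hp]
    nlinarith [rr_pos h]
  · rw [max_eq_left hc]
    have h1 : rr h < 1 / 2 ^ ms h := rr_lt h
    have h2 : (2:ℝ) ^ ss h ≤ 2 ^ ms h := pow_le_pow_right₀ (by norm_num) (ss_le_ms h)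
    have hp := two_pow_pos (ss h)
    have hp2 := two_pow_pos (ms h)
    have : (1:ℝ) / 2 ^ ms h ≤ 1 / 2 ^ ss h := by
      apply div_le_div_of_nonneg_left (by norm_num) hp h2
    linarith

lemma ball_contains (h : Good u v) : dd h - rad h ≤ u ∧ v ≤ dd h + rad h := by
  obtain ⟨h1, h2⟩ := mem_ball h
  have h3 := rr_le_rad h
  constructor <;> linarith

/-- size bound : `2 rad < 8 (v - u)`. -/
lemma rad_lt (h : Good u v) : rad h < 4 * rr h := by
  have h1 := tr_spec' h
  have h2 : (2:ℝ) ^ (tr h + 1) = 2 ^ tr h * 2 := pow_succ 2 (tr h)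
  have h3 : rad h ≤ 1 / 2 ^ tr h := by
    unfold rad TT
    have : (2:ℝ) ^ tr h ≤ 2 ^ max (ss h) (tr h) :=
      pow_le_pow_right₀ (by norm_num) (le_max_right _ _)
    apply div_le_div_of_nonneg_left (by norm_num) (two_pow_pos _) this
  have hp := two_pow_pos (tr h)
  rw [h2] at h1
  have : 1 / (2:ℝ) ^ tr h < 4 * rr h := by
    rw [div_lt_iff₀ hp]
    nlinarith
  linarith

lemma rad_size (h : Good u v) : 2 * rad h ≤ 8 * (v - u) := by
  have h1 := rad_lt h
  have h2 := rr_le h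
  linarith

lemma bad_of_le {u v u' v' : ℝ} (hu : u' ≤ u) (hv : v ≤ v') {m : ℕ}
    (hb : Bad u v m) : Bad u' v' m := by
  obtain ⟨j, h1, h2⟩ := hb
  have hp := two_pow_pos m
  refine ⟨j, ?_, ?_⟩ <;> nlinarith

lemma thin_rad (h : Good u v) (hc : ss h ≤ tr h) : 2 * rr h ≤ rad h := by
  unfold rad TT
  rw [max_eq_right hc, le_div_iff₀ (two_pow_pos _)]
  linarith [tr_spec h]

/-- THE KEY LEMMA : monotonicity of the hull construction. -/
lemma G_mono {u v u' v' : ℝ} (h : Good u v) (h' : Good u' v') (hu : u' ≤ u) (hv : v ≤ v') :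
    dd h' - rad h' ≤ dd h - rad h ∧ dd h + rad h ≤ dd h' + rad h' := by
  have key : |dd h - dd h'| + rad h ≤ rad h' := by
    by_cases hdd : dd h = dd h'
    · -- same centre : radius is monotone
      rw [hdd, sub_self, abs_zero, zero_add]
      have hsseq : ss h = ss h' := by
        apply le_antisymm
        · exact Nat.find_le (show isDy (ss h') (dd h) from hdd ▸ ss_dy h')
        · exact Nat.find_le (show isDy (ss h) (dd h') from hdd ▸ ss_dy h)
      have hrr : rr h ≤ rr h' := by
        obtain ⟨g1, g2⟩ := dd_mem h
        unfold rr
        rw [← hdd]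
        apply max_le
        · exact le_trans (by linarith) (le_max_left _ _)
        · exact le_trans (by linarith) (le_max_right _ _)
      have htr : tr h' ≤ tr h := by
        have hNF : NF h' ≤ NF h := by
          apply Nat.find_le
          have hf : Fail h (NF h) := Nat.find_spec (failEx h)
          unfold Fail at hf ⊢
          nlinarith [two_pow_pos (NF h)]
        unfold tr
        omega
      have hTT : TT h' ≤ TT h := by
        unfold TT
        rw [hsseq]
        exact max_le (le_max_left _ _) (le_trans htr (le_max_right _ _))
      unfold rad
      apply div_le_div_of_nonneg_left (by norm_num) (two_pow_pos _)
      exact pow_le_pow_right₀ (by norm_num) hTT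
    · -- different centres
      obtain ⟨hdu, hdv⟩ := dd_mem h
      obtain ⟨hdu', hdv'⟩ := dd_mem h'
      have hdmem' : u' ≤ dd h ∧ dd h ≤ v' := ⟨le_trans hu hdu, le_trans hdv hv⟩
      have hms : ms h' ≤ ms h := by
        by_contra hc
        push_neg at hc
        exact not_bad_ms h' (bad_of_le hu hv (bad_mono (by omega) (bad_ms_succ h)))
      have hdy : ¬ isDy (ms h') (dd h) := fun hx =>
        hdd (dy_mem_unique h' hx (isDy_mono (ss_le_ms h') (ss_dy h')) hdmem' ⟨hdu', hdv'⟩)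
      have hss : ms h' < ss h := by
        by_contra hc
        push_neg at hc
        exact hdy (isDy_mono hc (ss_dy h))
      have hss' : ss h' < ss h := lt_of_le_of_lt (ss_le_ms h') hss
      -- integer gap
      obtain ⟨k, hk⟩ := ss_dy h
      obtain ⟨k', hk'⟩ := isDy_mono (le_of_lt hss') (ss_dy h')
      have hp := two_pow_pos (ss h)
      have hkne : k ≠ k' := by
        intro he
        apply hdd
        have : dd h * 2 ^ ss h = dd h' * 2 ^ ss h := by rw [hk, hk', he]
        exact mul_right_cancel₀ (ne_of_gt hp) this
      have hgap : 1 / 2 ^ ss h ≤ |dd h - dd h'| := by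
        have h1 : |dd h - dd h'| * 2 ^ ss h = |(k:ℝ) - k'| := by
          rw [← abs_of_pos hp, ← abs_mul, sub_mul, hk, hk']
        have h2 : (1:ℝ) ≤ |(k:ℝ) - k'| := by
          have : (1:ℤ) ≤ |k - k'| := Int.one_le_abs (sub_ne_zero.mpr hkne)
          push_cast at this ⊢
          exact_mod_cast this
        rw [div_le_iff₀ hp, h1]
        linarith
      have hrad_le : rad h ≤ 1 / 2 ^ ss h := by
        unfold rad TT
        apply div_le_div_of_nonneg_left (by norm_num) (two_pow_pos _)
        exact pow_le_pow_right₀ (by norm_num) (le_max_left _ _)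
      have hdelta : |dd h - dd h'| ≤ rr h' := by
        obtain ⟨b1, b2⟩ := mem_ball h'
        rw [abs_sub_le_iff]
        constructor <;> linarith
      by_cases hthin : ss h' ≤ tr h'
      · -- thin case
        have := thin_rad h' hthin
        have h2 : rad h ≤ |dd h - dd h'| := le_trans hrad_le hgap
        linarith
      · -- fat case
        push_neg at hthin
        have hfat : Fail h' (ss h') := fail_mono h' (by omega) (tr_spec' h')
        have hmseq : ms h' = ss h' := by
          have h1 : rr h' < 1 / 2 ^ ms h' := rr_lt h'
          unfold Fail at hfat
          by_contra hne
          have h2 : ss h' < ms h' := lt_of_le_of_ne (ss_le_ms h') (Ne.symm hne)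
          have h3 : (2:ℝ) ^ (ss h' + 1) ≤ 2 ^ ms h' := pow_le_pow_right₀ (by norm_num) (by omega)
          have h4 : 1 / 2 ^ ms h' ≤ 1 / (2:ℝ) ^ (ss h' + 1) :=
            div_le_div_of_nonneg_left (by norm_num) (two_pow_pos _) h3
          have h5 : 1 < 2 ^ (ss h' + 1) * rr h' := by
            rw [pow_succ]
            nlinarith [rr_pos h', two_pow_pos (ss h')]
          have h6 : 1 / (2:ℝ) ^ (ss h' + 1) < rr h' := by
            rw [div_lt_iff₀ (two_pow_pos _)]
            nlinarith
          linarith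
        have hrad' : rad h' = 1 / 2 ^ ms h' := by
          unfold rad TT
          rw [max_eq_left (le_of_lt hthin), hmseq]
        -- δ ≤ 2^{-ms'} - 2^{-ss}
        have hδlt : |dd h - dd h'| < 1 / 2 ^ ms h' := lt_of_le_of_lt hdelta (rr_lt h')
        have hδle : |dd h - dd h'| ≤ 1 / 2 ^ ms h' - 1 / 2 ^ ss h := by
          have hz : |dd h - dd h'| * 2 ^ ss h = |(k:ℝ) - k'| := by
            rw [← abs_of_pos hp, ← abs_mul, sub_mul, hk, hk']
          have hpow : (1:ℝ) / 2 ^ ms h' * 2 ^ ss h = (2:ℝ) ^ (ss h - ms h') := by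
            have : (2:ℝ) ^ ss h = 2 ^ ms h' * 2 ^ (ss h - ms h') := by
              rw [← pow_add]; congr 1; omega
            rw [this]
            field_simp
          have h1 : |(k:ℝ) - k'| < 2 ^ (ss h - ms h') := by
            rw [← hz, ← hpow]
            have := two_pow_pos (ss h)
            nlinarith
          have h2 : |(k:ℝ) - k'| ≤ 2 ^ (ss h - ms h') - 1 := by
            have : |k - k'| < 2 ^ (ss h - ms h') := by exact_mod_cast h1
            have h3 : |k - k'| ≤ 2 ^ (ss h - ms h') - 1 := by omega
            push_cast at h3 ⊢
            exact_mod_cast h3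
          rw [← hz] at h2
          rw [← hpow] at h2
          have := two_pow_pos (ss h)
          calc |dd h - dd h'| = |dd h - dd h'| * 2 ^ ss h / 2 ^ ss h := by field_simp
            _ ≤ (1 / 2 ^ ms h' * 2 ^ ss h - 1) / 2 ^ ss h := by
                gcongr
            _ = 1 / 2 ^ ms h' - 1 / 2 ^ ss h := by field_simp
        rw [hrad']
        linarith
  constructor
  · have h1 : dd h' - dd h ≤ |dd h - dd h'| := by
      rw [abs_sub_comm]
      exact le_abs_self _
    linarith
  · have h1 : dd h - dd h' ≤ |dd h - dd h'| := le_abs_self _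
    linarith

lemma dd_dy_TT (h : Good u v) : isDy (TT h) (dd h) :=
  isDy_mono (le_max_left _ _) (ss_dy h)

/-- the numerator of the chosen lean dyadic interval. -/
def nn (h : Good u v) : ℤ := Classical.choose (dd_dy_TT h) - 1

lemma nn_left (h : Good u v) : (((nn h : ℚ) / 2 ^ TT h : ℚ) : ℝ) = dd h - rad h := by
  have hp := two_pow_pos (TT h)
  unfold nn rad
  set k := Classical.choose (dd_dy_TT h) with hkdef
  have hk : dd h * 2 ^ TT h = (k : ℝ) := Classical.choose_spec (dd_dy_TT h)
  have h2 : (k:ℝ) / 2 ^ TT h = dd h := by rw [div_eq_iff (ne_of_gt hp)]; linarith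
  push_cast
  calc ((k:ℝ) - 1) / 2 ^ TT h = (k:ℝ) / 2 ^ TT h - 1 / 2 ^ TT h := by ring
    _ = dd h - 1 / 2 ^ TT h := by rw [h2]

lemma nn_right (h : Good u v) : ((((nn h : ℚ) + 2) / 2 ^ TT h : ℚ) : ℝ) = dd h + rad h := by
  have hp := two_pow_pos (TT h)
  unfold nn rad
  set k := Classical.choose (dd_dy_TT h) with hkdef
  have hk : dd h * 2 ^ TT h = (k : ℝ) := Classical.choose_spec (dd_dy_TT h)
  have h2 : (k:ℝ) / 2 ^ TT h = dd h := by rw [div_eq_iff (ne_of_gt hp)]; linarith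
  push_cast
  calc ((k:ℝ) - 1 + 2) / 2 ^ TT h = (k:ℝ) / 2 ^ TT h + 1 / 2 ^ TT h := by ring
    _ = dd h + 1 / 2 ^ TT h := by rw [h2]

end

end NTG

/-! ## P-side machinery : segLists, trail points, concatenated points -/

namespace NTP

open PreNaturalSpace

variable {V : Type} (P : PreNaturalSpace V)

lemma segList_last (p : ℕ → V) (n : ℕ) : (segList p (n + 1)).getLast? = some (p n) := by
  rw [segList]
  split_ifs with h
  · exact h
  · exact List.getLast?_concat

lemma segList_prefix (p : ℕ → V) (n : ℕ) : segList p n <+: segList p (n + 1) := by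
  conv_rhs => rw [segList]
  split_ifs with h
  · exact List.prefix_refl _
  · exact List.prefix_append _ _

lemma segList_prefix_le (p : ℕ → V) {m n : ℕ} (h : m ≤ n) :
    segList p m <+: segList p n := by
  induction h with
  | refl => exact List.prefix_refl _
  | step _ ih => exact ih.trans (segList_prefix p _)

lemma segList_mem (p : ℕ → V) {n : ℕ} {a : V} (h : a ∈ segList p n) :
    ∃ j, j < n ∧ p j = a := by
  induction n with
  | zero => simp [segList] at h
  | succ n ih =>
    rw [segList] at h
    split_ifs at h with hc
    · obtain ⟨j, hj, he⟩ := ih h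
      exact ⟨j, by omega, he⟩
    · rcases List.mem_append.mp h with h' | h'
      · obtain ⟨j, hj, he⟩ := ih h'
        exact ⟨j, by omega, he⟩
      · exact ⟨n, by omega, (List.mem_singleton.mp h').symm⟩

lemma segList_chain (p : ℕ → V) (hmono : ∀ k, P.refines (p (k + 1)) (p k)) (n : ℕ) :
    (segList p n).Chain' fun a b => P.strict b a := by
  induction n with
  | zero => exact List.isChain_nil
  | succ n ih =>
    rw [segList]
    split_ifs with hc
    · exact ih
    · apply List.isChain_append.mpr
      refine ⟨ih, List.isChain_singleton _, ?_⟩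
      intro x hx y hy
      rw [List.head?_cons, Option.mem_some_iff] at hy
      subst hy
      match n, hx with
      | n + 1, hx =>
        rw [segList_last] at hx
        rw [Option.mem_some_iff] at hx
        subst hx
        refine ⟨hmono n, ?_⟩
        intro he
        apply hc
        rw [segList_last, he]

lemma segList_refines (p : ℕ → V) (hmono : ∀ k, P.refines (p (k + 1)) (p k)) {n : ℕ} {a : V}
    (h : a ∈ segList p (n + 1)) : P.refines (p n) a := by
  obtain ⟨j, hj, he⟩ := segList_mem p h
  subst he
  exact P.refines_of_le hmono (by omega)

lemma prefix_length_lt {l₁ l₂ : List V} (h : l₁ <+: l₂) {a b : V}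
    (ha : l₁.getLast? = some a) (hb : l₂.getLast? = some b) (hab : a ≠ b) :
    l₁.length < l₂.length := by
  rcases lt_or_ge l₁.length l₂.length with h' | h'
  · exact h'
  · exfalso
    have heq : l₁ = l₂ := h.eq_of_length (le_antisymm h.length_le h')
    subst heq
    rw [ha] at hb
    exact hab (Option.some_injective _ hb)

lemma shrink_index (p : ℕ → V) (hp : P.IsPoint p) (n : ℕ) :
    ∃ m, n < m ∧ P.strict (p m) (p n) := by
  obtain ⟨m, hm⟩ := hp.shrink n
  refine ⟨m, ?_, hm⟩
  by_contra hc
  push_neg at hc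
  exact hm.2 (P.refines_antisymm _ _ hm.1 (P.refines_of_le hp.mono hc))

lemma segList_length_grow (p : ℕ → V) (hp : P.IsPoint p) (L : ℕ) :
    ∃ n, L ≤ (segList p n).length := by
  induction L with
  | zero => exact ⟨0, Nat.zero_le _⟩
  | succ L ih =>
    obtain ⟨n, hn⟩ := ih
    obtain ⟨m, hnm, hm⟩ := shrink_index P p hp n
    refine ⟨m + 1, ?_⟩
    have hpre : segList p (n + 1) <+: segList p (m + 1) := segList_prefix_le p (by omega)
    have hlt : (segList p (n + 1)).length < (segList p (m + 1)).length :=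
      prefix_length_lt hpre (segList_last p n) (segList_last p m) fun he => hm.2 (he ▸ rfl)
    have h2 : (segList p n).length ≤ (segList p (n + 1)).length :=
      (segList_prefix p n).length_le
    omega

lemma getLast?_take {l : List V} {j : ℕ} (h1 : 1 ≤ j) (h2 : j ≤ l.length) :
    (l.take j).getLast? = some (l.get ⟨j - 1, by omega⟩) := by
  rw [List.getLast?_eq_getElem?]
  have hlen : (l.take j).length = j := by rw [List.length_take]; omega
  rw [hlen, List.getElem?_take, if_pos (by omega), List.getElem?_eq_getElem (by omega)]
  rfl

lemma segList_take (p : ℕ → V) (l : List V)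
    (hl : l.Chain' fun a b => P.strict b a)
    (hq : ∀ i (h : i < l.length), p i = l.get ⟨i, h⟩) :
    ∀ j, j ≤ l.length → segList p j = l.take j := by
  intro j
  induction j with
  | zero => intro _; simp [segList]
  | succ j ih =>
    intro hj
    have hj' : j ≤ l.length := by omega
    have hjl : j < l.length := by omega
    rw [segList, ih hj']
    have htake : l.take (j + 1) = l.take j ++ [l.get ⟨j, hjl⟩] := by
      rw [List.take_succ]
      congr 1
      rw [List.getElem?_eq_getElem hjl]
      rfl
    split_ifs with hc
    · exfalso
      match j, hj, hc with
      | j + 1, hj, hc =>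
        have hlast : (l.take (j + 1)).getLast? = some (l.get ⟨j, by omega⟩) :=
          getLast?_take (by omega) (by omega)
        rw [hlast, hq (j+1) (by omega)] at hc
        have := List.isChain_iff_getElem.mp hl j (by omega)
        have hne : l.get ⟨j + 1, by omega⟩ ≠ l.get ⟨j, by omega⟩ := this.2
        exact hne (Option.some_injective _ hc).symm
    · rw [htake, hq j hjl]

/-- The canonical trail-space dot determined by the first `n` values of a point. -/
noncomputable def trailDot (x : P.Pt) (n : ℕ) : P.Trail :=
  ⟨segList x.1 n, segList_chain P x.1 x.2.mono n⟩

lemma trailPt_isPoint (x : P.Pt) : P.trailSpace.IsPoint fun n => trailDot P x n := by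
  constructor
  · intro n
    exact segList_prefix x.1 n
  · intro n
    obtain ⟨m, hm⟩ := segList_length_grow P x.1 x.2 ((segList x.1 n).length + 1)
    have hnm : n ≤ m := by
      by_contra hc
      push_neg at hc
      have := (segList_prefix_le x.1 (le_of_lt hc)).length_le
      omega
    refine ⟨m, segList_prefix_le x.1 hnm, ?_⟩
    intro he
    have h4 := congrArg (fun t : P.Trail => t.1.length) he
    simp only [trailDot] at h4
    omega
  · rintro a b ⟨xa, hxa, xb, hxb, hab⟩
    obtain ⟨m, hm⟩ := x.2.decides xa xb hab
    refine ⟨m + 1, ?_⟩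
    have hmem : x.1 m ∈ (trailDot P x (m+1)).1.getLast? := by
      show x.1 m ∈ (segList x.1 (m+1)).getLast?
      rw [segList_last]
      rfl
    rcases hm with hm | hm
    · exact Or.inl ⟨x.1 m, hmem, xa, hxa, hm⟩
    · exact Or.inr ⟨x.1 m, hmem, xb, hxb, hm⟩

/-- The trail-space point determined by a point. -/
noncomputable def trailPt (x : P.Pt) : P.trailSpace.Pt := ⟨fun n => trailDot P x n, trailPt_isPoint P x⟩

/-! ### concatenation of a trail and (the tail of) a point -/

/-- the sequence following the list `s`, then the point `z` from index `k` on. -/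
def catSeq (s : List V) (z : ℕ → V) (k : ℕ) : ℕ → V := fun i =>
  if h : i < s.length then s.get ⟨i, h⟩ else z (i - s.length + k)

lemma catSeq_ge (s : List V) (z : ℕ → V) (k i : ℕ) (h : s.length ≤ i) :
    catSeq s z k i = z (i - s.length + k) := by
  unfold catSeq
  rw [dif_neg (by omega)]

lemma catSeq_lt (s : List V) (z : ℕ → V) (k i : ℕ) (h : i < s.length) :
    catSeq s z k i = s.get ⟨i, h⟩ := by
  unfold catSeq
  rw [dif_pos h]

lemma strict_index {z : ℕ → V} (hz : P.IsPoint z) {j k : ℕ} (h : P.strict (z j) (z k)) :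
    k < j := by
  by_contra hc
  push_neg at hc
  exact h.2 (P.refines_antisymm _ _ h.1 (P.refines_of_le hz.mono hc))

lemma cat_isPoint (s : List V) (hs : s.Chain' fun a b => P.strict b a) {a : V}
    (hsl : s.getLast? = some a) (z : ℕ → V) (hz : P.IsPoint z) (k : ℕ)
    (hzk : P.refines (z k) a) : P.IsPoint (catSeq s z k) := by
  have hslen : 0 < s.length := by
    cases s with
    | nil => simp at hsl
    | cons b t => simp
  constructor
  · intro i
    rcases lt_or_ge (i + 1) s.length with h1 | h1
    · rw [catSeq_lt s z k (i+1) h1, catSeq_lt s z k i (by omega)]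
      exact (List.isChain_iff_getElem.mp hs i (by omega)).1
    · rcases lt_or_ge i s.length with h2 | h2
      · -- i = s.length - 1
        have hi : i = s.length - 1 := by omega
        rw [catSeq_ge s z k (i+1) h1, catSeq_lt s z k i h2]
        have : i + 1 - s.length + k = k := by omega
        rw [this]
        have hget : s.get ⟨i, h2⟩ = a := by
          have := List.getLast?_eq_getElem? (l := s)
          rw [hsl] at this
          have h3 : s[s.length - 1]? = some a := this.symm
          rw [List.getElem?_eq_getElem (by omega)] at h3
          have := Option.some_injective _ h3
          simp only [hi]
          exact this
        rw [hget]
        exact hzk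
      · rw [catSeq_ge s z k (i+1) (by omega), catSeq_ge s z k i h2]
        have : i + 1 - s.length + k = (i - s.length + k) + 1 := by omega
        rw [this]
        exact hz.mono _
  · intro n
    rcases lt_or_ge n s.length with h1 | h1
    · -- inside the list : use a strict drop below z k
      obtain ⟨j, hkj, hj⟩ := shrink_index P z hz k
      refine ⟨j - k + s.length, ?_⟩
      rw [catSeq_ge s z k _ (by omega), catSeq_lt s z k n h1]
      have : j - k + s.length - s.length + k = j := by omega
      rw [this]
      have hran : P.refines a (s.get ⟨n, h1⟩) := by
        have hmem : a ∈ s.getLast? := by rw [hsl]; rfl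
        have hpre : s.take (n+1) <+: s := List.take_prefix _ _
        have hlast : (s.take (n+1)).getLast? = some (s.get ⟨n, h1⟩) :=
          getLast?_take (by omega) (by omega)
        exact P.last_refines_of_prefix hs hpre hmem hlast
      have hzja : P.refines (z j) (s.get ⟨n, h1⟩) :=
        P.refines_trans _ _ _ (P.refines_trans _ _ _ hj.1 hzk) hran
      refine ⟨hzja, ?_⟩
      intro he
      apply hj.2
      apply P.refines_antisymm _ _ hj.1
      rw [he]
      exact P.refines_trans _ _ _ hzk hran
    · obtain ⟨j, hkj, hj⟩ := shrink_index P z hz (n - s.length + k)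
      refine ⟨j - k + s.length, ?_⟩
      rw [catSeq_ge s z k _ (by omega), catSeq_ge s z k n h1]
      have hkj' : k ≤ j := by omega
      have : j - k + s.length - s.length + k = j := by omega
      rw [this]
      exact hj
  · intro a' b' hab
    obtain ⟨m, hm⟩ := hz.decides a' b' hab
    have hmem : ∀ i, ∃ i', catSeq s z k i' = z i ∨ P.refines (catSeq s z k i') (z i) := by
      intro i
      rcases le_or_gt k i with h1 | h1
      · exact ⟨i - k + s.length, Or.inl (by rw [catSeq_ge s z k _ (by omega)]; congr 1; omega)⟩
      · refine ⟨s.length, Or.inr ?_⟩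
        rw [catSeq_ge s z k _ (le_refl _)]
        have : s.length - s.length + k = k := by omega
        rw [this]
        exact P.refines_of_le hz.mono (le_of_lt h1)
    obtain ⟨i', hi'⟩ := hmem m
    refine ⟨i', ?_⟩
    rcases hi' with he | hr
    · rw [he]; exact hm
    · rcases hm with hm | hm
      · exact Or.inl (P.apart_symm _ _ (P.apart_mono _ _ _ hr (P.apart_symm _ _ hm)))
      · exact Or.inr (P.apart_symm _ _ (P.apart_mono _ _ _ hr (P.apart_symm _ _ hm)))

end NTP


/-! ## SigPre-side machinery : the real number of a point of σ_ℝ -/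

namespace NTS

open PreNaturalSpace

/-- membership of a real number in a basic dot of the natural reals. -/
def inDot (r : ℝ) : RDot → Prop
  | none => True
  | some pq => (pq.1.1 : ℝ) ≤ r ∧ r ≤ (pq.1.2 : ℝ)

lemma not_rApart_of_mem {r : ℝ} {d e : RDot} (hd : inDot r d) (he : inDot r e) :
    ¬ rApart d e := by
  match d, e with
  | none, _ => intro h; exact h
  | some a, none => intro h; exact h
  | some a, some b =>
    simp only [inDot] at hd he
    rintro (h | h)
    all_goals
      have := (Rat.cast_lt (K := ℝ)).mpr h
      linarith [hd.1, hd.2, he.1, he.2]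

lemma rRefines_some {a b : { pq : ℚ × ℚ // pq.1 < pq.2 }}
    (h : rRefines (some a) (some b)) : b.1.1 ≤ a.1.1 ∧ a.1.2 ≤ b.1.2 := h

lemma rRefines_none_some {b : { pq : ℚ × ℚ // pq.1 < pq.2 }}
    (h : rRefines none (some b)) : False := h

lemma rRefines_proper {d : RDot} {b : { pq : ℚ × ℚ // pq.1 < pq.2 }}
    (h : rRefines d (some b)) : ∃ a, d = some a := by
  match d with
  | none => exact absurd h (by intro hh; exact hh)
  | some a => exact ⟨a, rfl⟩

lemma inDot_of_refines {r : ℝ} {d e : RDot} (h : rRefines d e) (hd : inDot r d) :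
    inDot r e := by
  match d, e with
  | _, none => trivial
  | none, some b => exact absurd h (by intro hh; exact hh)
  | some a, some b =>
    obtain ⟨h1, h2⟩ := rRefines_some h
    unfold inDot at hd ⊢
    have c1 := (Rat.cast_le (K := ℝ)).mpr h1
    have c2 := (Rat.cast_le (K := ℝ)).mpr h2
    exact ⟨le_trans c1 hd.1, le_trans hd.2 c2⟩

variable (p : SigPre.Pt)

/-- sooner or later every point of σ_ℝ enters a proper interval. -/
lemma ex_proper : ∃ n pq, ((p.1 n).1 : RDot) = some pq := by
  obtain ⟨m, hm⟩ := p.2.shrink 0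
  match h0 : ((p.1 0).1 : RDot) with
  | some pq => exact ⟨0, pq, h0⟩
  | none =>
    match hm' : ((p.1 m).1 : RDot) with
    | some pq => exact ⟨m, pq, hm'⟩
    | none =>
      exfalso
      exact hm.2 (Subtype.ext (hm'.trans h0.symm))

lemma proper_of_le {n m : ℕ} (h : n ≤ m) {pq} (hn : ((p.1 n).1 : RDot) = some pq) :
    ∃ pq', ((p.1 m).1 : RDot) = some pq' ∧ rRefines (some pq') (some pq) := by
  have href : SigPre.refines (p.1 m) (p.1 n) := SigPre.refines_of_le p.2.mono h
  have href' : rRefines (p.1 m).1 (p.1 n).1 := href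
  rw [hn] at href'
  obtain ⟨a, ha⟩ := rRefines_proper href'
  exact ⟨a, ha, ha ▸ href'⟩

/-- the set of left endpoints of a point of σ_ℝ. -/
def Ls : Set ℝ := {r | ∃ n pq, ((p.1 n).1 : RDot) = some pq ∧ r = (pq.1.1 : ℝ)}

lemma Ls_nonempty : (Ls p).Nonempty := by
  obtain ⟨n, pq, h⟩ := ex_proper p
  exact ⟨_, n, pq, h, rfl⟩

lemma cross_bound {n m : ℕ} {pq qr} (hn : ((p.1 n).1 : RDot) = some pq)
    (hm : ((p.1 m).1 : RDot) = some qr) : (pq.1.1 : ℚ) ≤ qr.1.2 := by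
  obtain ⟨a, ha, har⟩ := proper_of_le p (le_max_left n m) hn
  obtain ⟨b, hb, hbr⟩ := proper_of_le p (le_max_right n m) hm
  have hab : a = b := by
    rw [ha] at hb
    exact Option.some_injective _ hb
  subst hab
  obtain ⟨h1, h2⟩ := rRefines_some har
  obtain ⟨h3, h4⟩ := rRefines_some hbr
  have := a.2
  linarith

lemma Ls_bddAbove : BddAbove (Ls p) := by
  obtain ⟨n, pq, h⟩ := ex_proper p
  refine ⟨(pq.1.2 : ℝ), ?_⟩
  rintro r ⟨m, qr, hm, rfl⟩
  exact_mod_cast cross_bound p hm h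

/-- the real number determined by a point of σ_ℝ. -/
noncomputable def rho : ℝ := sSup (Ls p)

lemma rho_inDot (n : ℕ) : inDot (rho p) ((p.1 n).1 : RDot) := by
  match hn : ((p.1 n).1 : RDot) with
  | none => trivial
  | some pq =>
    constructor
    · exact le_csSup (Ls_bddAbove p) ⟨n, pq, hn, rfl⟩
    · apply csSup_le (Ls_nonempty p)
      rintro r ⟨m, qr, hm, rfl⟩
      exact_mod_cast cross_bound p hm hn

/-! ### sizes of lean dyadic intervals shrink to zero along points -/

lemma size_halves {d e : ↥IsLeanDyadic} (hr : rRefines d.1 e.1) (hne : d ≠ e)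
    {pqd pqe} (hd : (d.1 : RDot) = some pqd) (he : (e.1 : RDot) = some pqe) :
    pqd.1.2 - pqd.1.1 ≤ (pqe.1.2 - pqe.1.1) / 2 := by
  rcases d.2 with h0 | ⟨nd, md, hld⟩
  · rw [hd] at h0; exact absurd h0 (by simp)
  rcases e.2 with h0 | ⟨ne, me, hle⟩
  · rw [he] at h0; exact absurd h0 (by simp)
  have hpd : pqd = ⟨((nd : ℚ) / 2 ^ md, ((nd : ℚ) + 2) / 2 ^ md), dyadic_lt nd md⟩ := by
    have := hd.symm.trans hld
    exact Option.some_injective _ this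
  have hpe : pqe = ⟨((ne : ℚ) / 2 ^ me, ((ne : ℚ) + 2) / 2 ^ me), dyadic_lt ne me⟩ := by
    have := he.symm.trans hle
    exact Option.some_injective _ this
  rw [hd, he] at hr
  obtain ⟨h1, h2⟩ := rRefines_some hr
  rw [hpd, hpe] at h1 h2 ⊢
  simp only at h1 h2 ⊢
  have hpmd : (0:ℚ) < 2 ^ md := by positivity
  have hpme : (0:ℚ) < 2 ^ me := by positivity
  have e1 : (2:ℚ) / 2 ^ md = ((nd:ℚ) + 2) / 2 ^ md - (nd:ℚ) / 2 ^ md := by ring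
  have e2 : (2:ℚ) / 2 ^ me = ((ne:ℚ) + 2) / 2 ^ me - (ne:ℚ) / 2 ^ me := by ring
  have hsz : (2:ℚ) / 2 ^ md ≤ 2 / 2 ^ me := by rw [e1, e2]; linarith
  have hle2 : (2:ℚ) ^ me ≤ 2 ^ md := by
    rw [div_le_div_iff₀ hpmd hpme] at hsz
    nlinarith
  have hmm : me ≤ md := by
    by_contra hc
    push_neg at hc
    have : (2:ℚ) ^ md < 2 ^ me := pow_lt_pow_right₀ (by norm_num) hc
    linarith
  by_cases heq : me = md
  · exfalso
    subst heq
    have hnd : nd = ne := by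
      rw [div_le_div_iff₀ hpme hpme] at h1 h2
      have l1 : (ne : ℚ) ≤ nd := by nlinarith
      have l2 : (nd : ℚ) ≤ ne := by nlinarith
      exact_mod_cast le_antisymm l2 l1
    apply hne
    apply Subtype.ext
    rw [hld, hle, hnd]
  · have hlt : me < md := lt_of_le_of_ne hmm heq
    have h3 : (2:ℚ) ^ (me + 1) ≤ 2 ^ md := pow_le_pow_right₀ (by norm_num) (by omega)
    have h4 : (2:ℚ) / 2 ^ md ≤ 2 / 2 ^ (me + 1) := by
      apply div_le_div_of_nonneg_left (by norm_num) (by positivity) h3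
    have h5 : (2:ℚ) / 2 ^ (me + 1) = (2 / 2 ^ me) / 2 := by
      rw [pow_succ]; ring
    calc ((nd:ℚ) + 2) / 2 ^ md - (nd:ℚ) / 2 ^ md = 2 / 2 ^ md := by ring
      _ ≤ (2 / 2 ^ me) / 2 := by rw [← h5]; exact h4
      _ = (((ne:ℚ) + 2) / 2 ^ me - (ne:ℚ) / 2 ^ me) / 2 := by rw [← e2]

lemma size_to_zero (p : SigPre.Pt) (q : ℚ) (hq : 0 < q) :
    ∃ n pq, ((p.1 n).1 : RDot) = some pq ∧ pq.1.2 - pq.1.1 ≤ q := by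
  have step : ∀ n pq, ((p.1 n).1 : RDot) = some pq →
      ∃ m qr, ((p.1 m).1 : RDot) = some qr ∧ qr.1.2 - qr.1.1 ≤ (pq.1.2 - pq.1.1) / 2 := by
    intro n pq hn
    obtain ⟨m, hm⟩ := p.2.shrink n
    have hr : rRefines (p.1 m).1 (p.1 n).1 := hm.1
    obtain ⟨qr, hqr⟩ := rRefines_proper (hn ▸ hr)
    exact ⟨m, qr, hqr, size_halves hm.1 hm.2 hqr hn⟩
  obtain ⟨n0, pq0, h0⟩ := ex_proper p
  have iter : ∀ k : ℕ, ∃ n pq, ((p.1 n).1 : RDot) = some pq ∧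
      pq.1.2 - pq.1.1 ≤ (pq0.1.2 - pq0.1.1) / 2 ^ k := by
    intro k
    induction k with
    | zero => exact ⟨n0, pq0, h0, by norm_num⟩
    | succ k ih =>
      obtain ⟨n, pq, hn, hsz⟩ := ih
      obtain ⟨m, qr, hm, hsz'⟩ := step n pq hn
      refine ⟨m, qr, hm, ?_⟩
      rw [pow_succ]
      have : (pq0.1.2 - pq0.1.1) / (2 ^ k * 2) = ((pq0.1.2 - pq0.1.1) / 2 ^ k) / 2 := by
        ring
      rw [this]
      linarith
  have hs0 : 0 < pq0.1.2 - pq0.1.1 := by linarith [pq0.2]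
  obtain ⟨k, hk⟩ := pow_unbounded_of_one_lt ((pq0.1.2 - pq0.1.1) / q) (by norm_num : (1:ℚ) < 2)
  obtain ⟨n, pq, hn, hsz⟩ := iter k
  refine ⟨n, pq, hn, le_trans hsz ?_⟩
  rw [div_lt_iff₀ hq] at hk
  rw [div_le_iff₀ (by positivity : (0:ℚ) < 2 ^ k)]
  nlinarith

lemma size_antitone (p : SigPre.Pt) {n m : ℕ} (h : n ≤ m) {pq qr}
    (hn : ((p.1 n).1 : RDot) = some pq) (hm : ((p.1 m).1 : RDot) = some qr) :
    qr.1.2 - qr.1.1 ≤ pq.1.2 - pq.1.1 := by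
  obtain ⟨a, ha, har⟩ := proper_of_le p h hn
  have : a = qr := by
    rw [hm] at ha
    exact (Option.some_injective _ ha).symm
  subst this
  obtain ⟨h1, h2⟩ := rRefines_some har
  linarith

lemma rho_lt_ex_apart (p q : SigPre.Pt) (h : rho p < rho q) :
    ∃ n, SigPre.apart (p.1 n) (q.1 n) := by
  obtain ⟨d, hd0, hdlt⟩ := exists_rat_btwn (by linarith : (0:ℝ) < (rho q - rho p) / 2)
  have hd0' : (0:ℚ) < d := by exact_mod_cast hd0
  obtain ⟨np, pqp, hp1, hp2⟩ := size_to_zero p d hd0'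
  obtain ⟨nq, pqq, hq1, hq2⟩ := size_to_zero q d hd0'
  set N := max np nq
  obtain ⟨a, ha, _⟩ := proper_of_le p (le_max_left np nq) hp1
  obtain ⟨b, hb, _⟩ := proper_of_le q (le_max_right np nq) hq1
  have hsa : a.1.2 - a.1.1 ≤ d := le_trans (size_antitone p (le_max_left np nq) hp1 ha) hp2
  have hsb : b.1.2 - b.1.1 ≤ d := le_trans (size_antitone q (le_max_right np nq) hq1 hb) hq2
  have hpa := rho_inDot p N
  have hqb := rho_inDot q N
  rw [ha] at hpa
  rw [hb] at hqb
  simp only [inDot] at hpa hqb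
  refine ⟨N, ?_⟩
  show rApart (p.1 N).1 (q.1 N).1
  rw [ha, hb]
  refine Or.inr ?_
  show a.1.2 < b.1.1
  have c1 : (a.1.2 : ℝ) ≤ (a.1.1 : ℝ) + (d:ℝ) := by
    have : ((a.1.2 - a.1.1 : ℚ) : ℝ) ≤ (d:ℝ) := by exact_mod_cast hsa
    push_cast at this
    linarith
  have c2 : (b.1.2 : ℝ) - (d:ℝ) ≤ (b.1.1 : ℝ) := by
    have : ((b.1.2 - b.1.1 : ℚ) : ℝ) ≤ (d:ℝ) := by exact_mod_cast hsb
    push_cast at this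
    linarith
  have : (a.1.2 : ℝ) < (b.1.1 : ℝ) := by linarith [hpa.1, hpa.2, hqb.1, hqb.2]
  exact_mod_cast this

lemma rho_eq_of_not_apart (p q : SigPre.Pt) (h : ∀ n, ¬ SigPre.apart (p.1 n) (q.1 n)) :
    rho p = rho q := by
  by_contra hne
  rcases lt_or_gt_of_ne hne with hlt | hlt
  · obtain ⟨n, hn⟩ := rho_lt_ex_apart p q hlt
    exact h n hn
  · obtain ⟨n, hn⟩ := rho_lt_ex_apart q p hlt
    exact h n (SigPre.apart_symm _ _ hn)

end NTS


/-! ## equivalence lemmas on the P side -/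

namespace NTP

open PreNaturalSpace

variable {V : Type} (P : PreNaturalSpace V)

lemma not_apart_of_above {c u w : V} (hu : P.refines c u) (hw : P.refines c w) :
    ¬ P.apart u w := fun h =>
  P.apart_irrefl c (P.apart_mono _ _ _ hu (P.apart_symm _ _ (P.apart_mono _ _ _ hw h)))

lemma not_apart_of_le {u w : V} (h : P.refines u w) : ¬ P.apart u w := fun ha =>
  P.apart_irrefl u (P.apart_mono _ _ _ h ha)

lemma not_apart_of_ge {u w : V} (h : P.refines w u) : ¬ P.apart u w := fun ha =>
  not_apart_of_le P h (P.apart_symm _ _ ha)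

/-- the concatenated point is pointwise non-apart from the original point. -/
lemma cat_equiv (x : P.Pt) (n : ℕ) (z : P.Pt) (k : ℕ)
    (hzk : P.refines (z.1 k) (x.1 n)) (i : ℕ) :
    ¬ P.apart (z.1 i) (catSeq (segList x.1 (n + 1)) z.1 k i) := by
  set s := segList x.1 (n + 1) with hs
  rcases lt_or_ge i s.length with h1 | h1
  · rw [catSeq_lt s z.1 k i h1]
    have hup : P.refines (x.1 n) (s.get ⟨i, h1⟩) :=
      segList_refines P x.1 x.2.mono (hs ▸ List.get_mem s ⟨i, h1⟩)
    have hcy : P.refines (z.1 k) (s.get ⟨i, h1⟩) := P.refines_trans _ _ _ hzk hup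
    rcases le_or_gt i k with h2 | h2
    · exact not_apart_of_above P (P.refines_of_le z.2.mono h2) hcy
    · have : P.refines (z.1 i) (z.1 k) := P.refines_of_le z.2.mono (le_of_lt h2)
      exact not_apart_of_le P (P.refines_trans _ _ _ this hcy)
  · rw [catSeq_ge s z.1 k i h1]
    rcases le_total (i - s.length + k) i with h2 | h2
    · exact not_apart_of_le P (P.refines_of_le z.2.mono h2)
    · exact not_apart_of_ge P (P.refines_of_le z.2.mono h2)

/-- pointwise non-apartness transfers to the trail points. -/
lemma trail_not_apart (x y : P.Pt) (h : ∀ i, ¬ P.apart (x.1 i) (y.1 i)) (i : ℕ) :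
    ¬ P.trailSpace.apart ((trailPt P x).1 i) ((trailPt P y).1 i) := by
  rintro ⟨u, hu, w, hw, haw⟩
  match i with
  | 0 =>
    have : ((trailPt P x).1 0).1 = ([] : List V) := by
      show segList x.1 0 = []
      rw [segList]
    rw [this] at hu
    simp at hu
  | i + 1 =>
    have hu' : u = x.1 i := by
      have : ((trailPt P x).1 (i+1)).1.getLast? = some (x.1 i) := segList_last x.1 i
      rw [this] at hu
      exact (by simpa using hu : x.1 i = u).symm
    have hw' : w = y.1 i := by
      have : ((trailPt P y).1 (i+1)).1.getLast? = some (y.1 i) := segList_last y.1 i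
      rw [this] at hw
      exact (by simpa using hw : y.1 i = w).symm
    subst hu' hw'
    exact h i haw

end NTP


/-! ## Main construction -/

namespace NTMain

open PreNaturalSpace NTP NTS

variable {V : Type} (P : PreNaturalSpace V) (f : RefMorphism P.trailSpace SigPre)

/-- the real number determined by the image under `f` of the trail point of `x`. -/
noncomputable def phi (x : P.Pt) : ℝ := rho (f.pointMap (trailPt P x))

/-- the set of values of `phi` on points passing through a dot below `a`. -/
def Sset (a : V) : Set ℝ := {r | ∃ z : P.Pt, ∃ k, P.refines (z.1 k) a ∧ r = phi P f z}

lemma Sset_nonempty (hP : P.IsNaturalSpace) (a : V) : (Sset P f a).Nonempty := by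
  obtain ⟨p, hp, m, hm⟩ := hP.2 a
  exact ⟨_, ⟨⟨p, hp⟩, m, hm.1, rfl⟩⟩

lemma Sset_mono {a b : V} (h : P.refines a b) : Sset P f a ⊆ Sset P f b := by
  rintro r ⟨z, k, hzk, rfl⟩
  exact ⟨z, k, P.refines_trans _ _ _ hzk h, rfl⟩

lemma phi_mem_Sset (x : P.Pt) (n : ℕ) : phi P f x ∈ Sset P f (x.1 n) :=
  ⟨x, n, P.refines_refl _, rfl⟩

/-- CORE : every value of `Sset (x n)` lies in the interval assigned by `f`
to the trail of `x` up to time `n`. -/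
lemma Sset_inDot (x : P.Pt) (n : ℕ) {r : ℝ} (hr : r ∈ Sset P f (x.1 n)) :
    inDot r ((f.toFun (trailDot P x (n + 1))).1 : RDot) := by
  obtain ⟨z, k, hzk, rfl⟩ := hr
  set s := segList x.1 (n + 1) with hsdef
  have hchain : s.Chain' fun a b => P.strict b a := segList_chain P x.1 x.2.mono (n + 1)
  have hlast : s.getLast? = some (x.1 n) := segList_last x.1 n
  have hY : P.IsPoint (catSeq s z.1 k) := cat_isPoint P s hchain hlast z.1 z.2 k hzk
  set Y : P.Pt := ⟨catSeq s z.1 k, hY⟩ with hYdef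
  have h1 : ∀ i, ¬ P.apart (z.1 i) (Y.1 i) := cat_equiv P x n z k hzk
  have h2 : ∀ i, ¬ P.trailSpace.apart ((trailPt P z).1 i) ((trailPt P Y).1 i) :=
    trail_not_apart P z Y h1
  have h3 : ∀ i, ¬ SigPre.apart ((f.pointMap (trailPt P z)).1 i)
      ((f.pointMap (trailPt P Y)).1 i) := by
    intro i hi
    obtain ⟨j, hj⟩ := f.reflects_apart _ _ (trailPt P z).2 (trailPt P Y).2 ⟨i, hi⟩
    exact h2 j hj
  have h4 : phi P f z = phi P f Y := rho_eq_of_not_apart _ _ h3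
  have h5 : (trailPt P Y).1 s.length = (⟨s, hchain⟩ : P.Trail) := by
    apply Subtype.ext
    show segList Y.1 s.length = s
    have hq : ∀ i (h : i < s.length), Y.1 i = s.get ⟨i, h⟩ := fun i h => catSeq_lt s z.1 k i h
    have := segList_take P Y.1 s hchain hq s.length (le_refl _)
    rwa [List.take_length] at this
  have h6 := rho_inDot (f.pointMap (trailPt P Y)) s.length
  rw [h4]
  have h7 : trailDot P x (n + 1) = (⟨s, hchain⟩ : P.Trail) := Subtype.ext rfl
  rw [h7, ← h5]
  exact h6

/-! ### the widened interval and its lean dyadic hull -/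

variable (hfin : ∀ a : V, {b | P.refines a b}.Finite)

/-- a positive padding, non-decreasing along refinement. -/
noncomputable def eps (a : V) : ℝ := (1/2 : ℝ) ^ ((hfin a).toFinset.card)

lemma eps_pos (a : V) : 0 < eps P hfin a := by unfold eps; positivity

lemma eps_mono {a b : V} (h : P.refines a b) : eps P hfin a ≤ eps P hfin b := by
  have hsub : {x | P.refines b x} ⊆ {x | P.refines a x} := fun x hx =>
    P.refines_trans _ _ _ h hx
  have hcard : (hfin b).toFinset.card ≤ (hfin a).toFinset.card :=
    Finset.card_le_card (Set.Finite.toFinset_subset_toFinset.mpr hsub)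
  exact pow_le_pow_of_le_one (by norm_num) (by norm_num) hcard

lemma eps_le (x : P.Pt) (n : ℕ) :
    eps P hfin (x.1 n) ≤ (1/2 : ℝ) ^ ((segList x.1 (n + 1)).length) := by
  haveI : DecidableEq V := Classical.decEq V
  haveI : IsTrans V (fun a b : V => P.strict b a) :=
    ⟨fun _ _ _ h1 h2 => P.strict_trans_flip h1 h2⟩
  have hchain := segList_chain P x.1 x.2.mono (n + 1)
  have hpw := List.isChain_iff_pairwise.mp hchain
  have hnodup : (segList x.1 (n + 1)).Nodup := hpw.imp fun h => Ne.symm h.2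
  have hsub : (segList x.1 (n + 1)).toFinset ⊆ (hfin (x.1 n)).toFinset := by
    intro e he
    have he' : e ∈ segList x.1 (n + 1) := List.mem_toFinset.mp he
    rw [Set.Finite.mem_toFinset]
    exact segList_refines P x.1 x.2.mono he'
  have hlen : (segList x.1 (n + 1)).length ≤ (hfin (x.1 n)).toFinset.card := by
    rw [← List.toFinset_card_of_nodup hnodup]
    exact Finset.card_le_card hsub
  exact pow_le_pow_of_le_one (by norm_num) (by norm_num) hlen

noncomputable def Klo (a : V) : ℝ := sInf (Sset P f a) - eps P hfin a
noncomputable def Khi (a : V) : ℝ := sSup (Sset P f a) + eps P hfin a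

def Guard (a : V) : Prop :=
  BddBelow (Sset P f a) ∧ BddAbove (Sset P f a) ∧
    Khi P f hfin a - Klo P f hfin a ≤ 1/32

lemma good_of_guard (hP : P.IsNaturalSpace) {a : V} (h : Guard P f hfin a) :
    NTG.Good (Klo P f hfin a) (Khi P f hfin a) := by
  constructor
  · have h1 : sInf (Sset P f a) ≤ sSup (Sset P f a) :=
      csInf_le_csSup (Sset_nonempty P f hP a) h.1 h.2.1
    have h2 := eps_pos P hfin a
    unfold Klo Khi
    linarith
  · exact h.2.2

open Classical in
/-- the dot map of the refinement morphism `g`. -/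
noncomputable def gdot (hP : P.IsNaturalSpace) (a : V) : ↥IsLeanDyadic :=
  if h : Guard P f hfin a then
    ⟨leanIv (NTG.nn (good_of_guard P f hfin hP h)) (NTG.TT (good_of_guard P f hfin hP h)),
      Or.inr ⟨_, _, rfl⟩⟩
  else ⟨none, Or.inl rfl⟩

lemma gdot_inDot (hP : P.IsNaturalSpace) (a : V) (r : ℝ)
    (hb : Guard P f hfin a → Klo P f hfin a ≤ r ∧ r ≤ Khi P f hfin a) :
    inDot r ((gdot P f hfin hP a).1 : RDot) := by
  unfold gdot
  split_ifs with h
  · obtain ⟨h1, h2⟩ := hb h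
    set gd := good_of_guard P f hfin hP h
    obtain ⟨b1, b2⟩ := NTG.ball_contains gd
    show ((((NTG.nn gd : ℚ)) / 2 ^ NTG.TT gd : ℚ) : ℝ) ≤ r ∧
      r ≤ ((((NTG.nn gd : ℚ) + 2) / 2 ^ NTG.TT gd : ℚ) : ℝ)
    rw [NTG.nn_left gd, NTG.nn_right gd]
    constructor <;> linarith
  · trivial

lemma guard_mono (hP : P.IsNaturalSpace) {a b : V} (hab : P.refines a b)
    (h : Guard P f hfin b) : Guard P f hfin a ∧
      Klo P f hfin b ≤ Klo P f hfin a ∧ Khi P f hfin a ≤ Khi P f hfin b := by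
  obtain ⟨hbb, hba, hw⟩ := h
  have hsub := Sset_mono P f hab
  have hne := Sset_nonempty P f hP a
  have h1 : BddBelow (Sset P f a) := hbb.mono hsub
  have h2 : BddAbove (Sset P f a) := hba.mono hsub
  have h3 : sInf (Sset P f b) ≤ sInf (Sset P f a) := csInf_le_csInf hbb hne hsub
  have h4 : sSup (Sset P f a) ≤ sSup (Sset P f b) := csSup_le_csSup hba hne hsub
  have h5 := eps_mono P hfin hab
  have hKlo : Klo P f hfin b ≤ Klo P f hfin a := by unfold Klo; linarith
  have hKhi : Khi P f hfin a ≤ Khi P f hfin b := by unfold Khi; linarith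
  exact ⟨⟨h1, h2, by linarith⟩, hKlo, hKhi⟩

lemma gdot_mono (hP : P.IsNaturalSpace) {a b : V} (hab : P.refines a b) :
    SigPre.refines (gdot P f hfin hP a) (gdot P f hfin hP b) := by
  show rRefines (gdot P f hfin hP a).1 (gdot P f hfin hP b).1
  unfold gdot
  split_ifs with ha hb hb
  · -- both proper
    obtain ⟨_, hKlo, hKhi⟩ := guard_mono P f hfin hP hab hb
    set ga := good_of_guard P f hfin hP ha
    set gb := good_of_guard P f hfin hP hb
    obtain ⟨m1, m2⟩ := NTG.G_mono ga gb hKlo hKhi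
    show ((NTG.nn gb : ℚ)) / 2 ^ NTG.TT gb ≤ (NTG.nn ga : ℚ) / 2 ^ NTG.TT ga ∧
      ((NTG.nn ga : ℚ) + 2) / 2 ^ NTG.TT ga ≤ ((NTG.nn gb : ℚ) + 2) / 2 ^ NTG.TT gb
    constructor
    · rw [← Rat.cast_le (K := ℝ), NTG.nn_left ga, NTG.nn_left gb]
      exact m1
    · rw [← Rat.cast_le (K := ℝ), NTG.nn_right ga, NTG.nn_right gb]
      exact m2
  · trivial
  · exact absurd (guard_mono P f hfin hP hab hb).1 ha
  · trivial

lemma gdot_size (hP : P.IsNaturalSpace) {a : V} (h : Guard P f hfin a) :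
    ∃ pq, ((gdot P f hfin hP a).1 : RDot) = some pq ∧
      ((pq.1.2 - pq.1.1 : ℚ) : ℝ) ≤ 8 * (Khi P f hfin a - Klo P f hfin a) := by
  unfold gdot
  rw [dif_pos h]
  set gd := good_of_guard P f hfin hP h
  refine ⟨⟨((NTG.nn gd : ℚ) / 2 ^ NTG.TT gd, ((NTG.nn gd : ℚ) + 2) / 2 ^ NTG.TT gd),
    dyadic_lt _ _⟩, rfl, ?_⟩
  rw [Rat.cast_sub, NTG.nn_left gd, NTG.nn_right gd]
  have := NTG.rad_size gd
  linarith

lemma phi_in_gdot (hP : P.IsNaturalSpace) (x : P.Pt) (n : ℕ) :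
    inDot (phi P f x) ((gdot P f hfin hP (x.1 n)).1 : RDot) := by
  apply gdot_inDot
  intro h
  have hmem := phi_mem_Sset P f x n
  have h1 : sInf (Sset P f (x.1 n)) ≤ phi P f x := csInf_le h.1 hmem
  have h2 : phi P f x ≤ sSup (Sset P f (x.1 n)) := le_csSup h.2.1 hmem
  have h3 := eps_pos P hfin (x.1 n)
  unfold Klo Khi
  constructor <;> linarith

/-- bound on the width of `Sset` along a point, from CORE. -/
lemma width_bound (x : P.Pt) (n : ℕ) {pq}
    (hpq : ((f.toFun (trailDot P x (n + 1))).1 : RDot) = some pq) :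
    BddBelow (Sset P f (x.1 n)) ∧ BddAbove (Sset P f (x.1 n)) ∧
      sSup (Sset P f (x.1 n)) - sInf (Sset P f (x.1 n)) ≤ ((pq.1.2 - pq.1.1 : ℚ) : ℝ) := by
  have hb : ∀ r ∈ Sset P f (x.1 n), (pq.1.1 : ℝ) ≤ r ∧ r ≤ (pq.1.2 : ℝ) := by
    intro r hr
    have := Sset_inDot P f x n hr
    rw [hpq] at this
    exact this
  have hne : (Sset P f (x.1 n)).Nonempty := ⟨_, phi_mem_Sset P f x n⟩
  have hbb : BddBelow (Sset P f (x.1 n)) := ⟨_, fun r hr => (hb r hr).1⟩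
  have hba : BddAbove (Sset P f (x.1 n)) := ⟨_, fun r hr => (hb r hr).2⟩
  refine ⟨hbb, hba, ?_⟩
  have h1 : sSup (Sset P f (x.1 n)) ≤ (pq.1.2 : ℝ) := csSup_le hne fun r hr => (hb r hr).2
  have h2 : (pq.1.1 : ℝ) ≤ sInf (Sset P f (x.1 n)) := le_csInf hne fun r hr => (hb r hr).1
  push_cast
  linarith

/-- eventually, the interval around `Sset (x n)` is guarded and as small as we wish. -/
lemma eventually_guard (hP : P.IsNaturalSpace) (x : P.Pt) (δ : ℝ) (hδ : 0 < δ) :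
    ∃ N, ∀ n, N ≤ n → Guard P f hfin (x.1 n) ∧
      Khi P f hfin (x.1 n) - Klo P f hfin (x.1 n) < δ := by
  set δ' := min δ (1/32) with hδ'def
  have hδ' : 0 < δ' := lt_min hδ (by norm_num)
  obtain ⟨q, hq0, hqδ⟩ := exists_rat_btwn (by linarith : (0:ℝ) < δ'/4)
  have hq0' : (0:ℚ) < q := by exact_mod_cast hq0
  obtain ⟨i0, pq0, h0, hsz0⟩ := size_to_zero (f.pointMap (trailPt P x)) q hq0'
  obtain ⟨L, hL⟩ := exists_pow_lt_of_lt_one (by linarith : (0:ℝ) < δ'/4)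
    (by norm_num : (1/2 : ℝ) < 1)
  obtain ⟨n1, hn1⟩ := segList_length_grow P x.1 x.2 L
  refine ⟨max i0 n1, fun n hn => ?_⟩
  -- the f-interval at time n+1
  obtain ⟨pq, hpq, href⟩ :=
    proper_of_le (f.pointMap (trailPt P x)) (show i0 ≤ n + 1 by omega) h0
  have hsz : pq.1.2 - pq.1.1 ≤ q :=
    le_trans (size_antitone (f.pointMap (trailPt P x)) (show i0 ≤ n + 1 by omega) h0 hpq) hsz0
  have hpq' : ((f.toFun (trailDot P x (n + 1))).1 : RDot) = some pq := hpq
  obtain ⟨hbb, hba, hw⟩ := width_bound P f x n hpq'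
  -- the eps at time n
  have heps : eps P hfin (x.1 n) ≤ (1/2 : ℝ) ^ L := by
    refine le_trans (eps_le P hfin x n) ?_
    apply pow_le_pow_of_le_one (by norm_num) (by norm_num)
    have hpre : segList x.1 n1 <+: segList x.1 (n + 1) :=
      segList_prefix_le x.1 (by omega)
    have := hpre.length_le
    omega
  have hwidth : Khi P f hfin (x.1 n) - Klo P f hfin (x.1 n) < δ' := by
    unfold Khi Klo
    have hcast : ((pq.1.2 - pq.1.1 : ℚ) : ℝ) ≤ (q : ℝ) := by exact_mod_cast hsz
    have heps' := eps_pos P hfin (x.1 n)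
    push_cast at hw hcast
    linarith [hL, hqδ, heps]
  refine ⟨⟨hbb, hba, by rw [hδ'def] at hwidth; exact le_of_lt (lt_of_lt_of_le hwidth (min_le_right _ _))⟩, ?_⟩
  exact lt_of_lt_of_le hwidth (min_le_left _ _)

lemma gdot_chain (hP : P.IsNaturalSpace) (x : P.Pt) :
    ∀ n, SigPre.refines (gdot P f hfin hP (x.1 (n + 1))) (gdot P f hfin hP (x.1 n)) :=
  fun n => gdot_mono P f hfin hP (x.2.mono n)

lemma gdot_none_or (hP : P.IsNaturalSpace) (a : V) :
    ((gdot P f hfin hP a).1 : RDot) = none ∨ ∃ pq, ((gdot P f hfin hP a).1 : RDot) = some pq := by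
  rcases h : ((gdot P f hfin hP a).1 : RDot) with _ | pq
  · exact Or.inl rfl
  · exact Or.inr ⟨pq, rfl⟩

lemma gdot_isPoint (hP : P.IsNaturalSpace) (x : P.Pt) :
    SigPre.IsPoint fun n => gdot P f hfin hP (x.1 n) := by
  constructor
  · exact gdot_chain P f hfin hP x
  · -- shrink
    intro n
    rcases gdot_none_or P f hfin hP (x.1 n) with hnone | ⟨pq, hpq⟩
    · obtain ⟨N, hN⟩ := eventually_guard P f hfin hP x 1 (by norm_num)
      obtain ⟨hg, _⟩ := hN (max (n + 1) N) (le_max_right _ _)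
      obtain ⟨pq', hpq', _⟩ := gdot_size P f hfin hP hg
      refine ⟨max (n + 1) N, SigPre.refines_of_le (p := fun i => gdot P f hfin hP (x.1 i))
        (gdot_chain P f hfin hP x)
        (le_trans (Nat.le_succ n) (le_max_left (n+1) N)), ?_⟩
      intro he
      have := congrArg (fun d : ↥IsLeanDyadic => (d.1 : RDot)) he
      rw [hpq', hnone] at this
      exact Option.some_ne_none _ this
    · set δ := ((pq.1.2 - pq.1.1 : ℚ) : ℝ) with hδdef
      have hδ : 0 < δ := by
        have := pq.2
        rw [hδdef]
        exact_mod_cast sub_pos.mpr this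
      obtain ⟨N, hN⟩ := eventually_guard P f hfin hP x (δ/8) (by linarith)
      obtain ⟨hg, hw⟩ := hN (max (n + 1) N) (le_max_right _ _)
      obtain ⟨pq', hpq', hsz'⟩ := gdot_size P f hfin hP hg
      refine ⟨max (n + 1) N, SigPre.refines_of_le (p := fun i => gdot P f hfin hP (x.1 i))
        (gdot_chain P f hfin hP x)
        (le_trans (Nat.le_succ n) (le_max_left (n+1) N)), ?_⟩
      intro he
      have := congrArg (fun d : ↥IsLeanDyadic => (d.1 : RDot)) he
      rw [hpq', hpq] at this
      have hpqeq : pq' = pq := Option.some_injective _ this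
      rw [hpqeq] at hsz'
      rw [← hδdef] at hsz'
      linarith
  · -- decides
    intro a b hab
    have hab' : rApart (a.1 : RDot) (b.1 : RDot) := hab
    match ha : (a.1 : RDot), hb : (b.1 : RDot) with
    | none, _ => rw [ha] at hab'; exact absurd hab' (by intro h; exact h)
    | some pa, none => rw [ha, hb] at hab'; exact absurd hab' (by intro h; exact h)
    | some pa, some pb =>
      rw [ha, hb] at hab'
      have key : ∀ gap : ℚ, 0 < gap →
          (∀ pq : { pq : ℚ × ℚ // pq.1 < pq.2 }, pq.1.2 - pq.1.1 < gap →
            rApart (some pq) (some pa) ∨ rApart (some pq) (some pb)) →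
          ∃ m, SigPre.apart ((fun n => gdot P f hfin hP (x.1 n)) m) a ∨
            SigPre.apart ((fun n => gdot P f hfin hP (x.1 n)) m) b := by
        intro gap hgap hdec
        obtain ⟨N, hN⟩ := eventually_guard P f hfin hP x ((gap : ℝ)/8)
          (by positivity)
        obtain ⟨hg, hw⟩ := hN N (le_refl _)
        obtain ⟨pq, hpq, hsz⟩ := gdot_size P f hfin hP hg
        have hszgap : pq.1.2 - pq.1.1 < gap := by
          have h1 : ((pq.1.2 - pq.1.1 : ℚ) : ℝ) < (gap : ℝ) := by linarith
          exact_mod_cast h1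
        refine ⟨N, ?_⟩
        rcases hdec pq hszgap with h | h
        · refine Or.inl ?_
          show rApart ((gdot P f hfin hP (x.1 N)).1 : RDot) (a.1 : RDot)
          rw [hpq, ha]
          exact h
        · refine Or.inr ?_
          show rApart ((gdot P f hfin hP (x.1 N)).1 : RDot) (b.1 : RDot)
          rw [hpq, hb]
          exact h
      rcases hab' with h | h
      · -- pb.2 < pa.1
        refine key (pa.1.1 - pb.1.2) (by linarith) ?_
        intro pq hsz
        by_contra hc
        push_neg at hc
        obtain ⟨h1, h2⟩ := hc
        rw [show rApart (some pq) (some pa) = (pa.1.2 < pq.1.1 ∨ pq.1.2 < pa.1.1) from rfl] at h1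
        rw [show rApart (some pq) (some pb) = (pb.1.2 < pq.1.1 ∨ pq.1.2 < pb.1.1) from rfl] at h2
        push_neg at h1 h2
        obtain ⟨h11, h12⟩ := h1
        obtain ⟨h21, h22⟩ := h2
        linarith
      · -- pa.2 < pb.1
        refine key (pb.1.1 - pa.1.2) (by linarith) ?_
        intro pq hsz
        by_contra hc
        push_neg at hc
        obtain ⟨h1, h2⟩ := hc
        rw [show rApart (some pq) (some pa) = (pa.1.2 < pq.1.1 ∨ pq.1.2 < pa.1.1) from rfl] at h1
        rw [show rApart (some pq) (some pb) = (pb.1.2 < pq.1.1 ∨ pq.1.2 < pb.1.1) from rfl] at h2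
        push_neg at h1 h2
        obtain ⟨h11, h12⟩ := h1
        obtain ⟨h21, h22⟩ := h2
        linarith

/-- non-apartness of two points transfers to equality of their `phi` values. -/
lemma phi_eq_of_not_apart (x y : P.Pt) (h : ∀ m, ¬ P.apart (x.1 m) (y.1 m)) :
    phi P f x = phi P f y := by
  have h2 := trail_not_apart P x y h
  have h3 : ∀ i, ¬ SigPre.apart ((f.pointMap (trailPt P x)).1 i)
      ((f.pointMap (trailPt P y)).1 i) := by
    intro i hi
    obtain ⟨j, hj⟩ := f.reflects_apart _ _ (trailPt P x).2 (trailPt P y).2 ⟨i, hi⟩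
    exact h2 j hj
  exact rho_eq_of_not_apart _ _ h3

/-- the refinement morphism induced by the trail morphism `f`. -/
noncomputable def gMor (hP : P.IsNaturalSpace) : RefMorphism P SigPre where
  toFun := gdot P f hfin hP
  maps_points := fun p hp => gdot_isPoint P f hfin hP ⟨p, hp⟩
  reflects_apart := by
    intro p q hp hq ⟨n, hn⟩
    by_contra hc
    push_neg at hc
    have h4 : phi P f ⟨p, hp⟩ = phi P f ⟨q, hq⟩ := phi_eq_of_not_apart P f ⟨p, hp⟩ ⟨q, hq⟩ hc
    have m1 := phi_in_gdot P f hfin hP ⟨p, hp⟩ n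
    have m2 := phi_in_gdot P f hfin hP ⟨q, hq⟩ n
    rw [h4] at m1
    exact not_rApart_of_mem m1 m2 hn

end NTMain

/-- a trail morphism from a spraid `𝒱` to `σ_ℝ` is represented, up to
`≡_ℝ`, by a refinement morphism from `𝒱` to `σ_ℝ`. -/
theorem stmt16 {V : Type} (P : PreNaturalSpace V) (hP : P.IsNaturalSpace)
    (hsp : P.IsSpraid) (f : RefMorphism P.trailSpace SigPre) :
    ∃ g : RefMorphism P SigPre, ∀ x : P.Pt, ∃ t : P.trailSpace.Pt,
      (∀ n, (t.1 n).1 = segList x.1 n) ∧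
      SigPre.pEquiv (f.pointMap t) (g.pointMap x) := by
  obtain ⟨⟨mx, hmax, hfin, hgrd⟩, hstp⟩ := hsp
  refine ⟨NTMain.gMor P f hfin hP, ?_⟩
  intro x
  refine ⟨NTP.trailPt P x, fun n => rfl, ?_⟩
  rintro ⟨n, hn⟩
  have m1 := NTS.rho_inDot (f.pointMap (NTP.trailPt P x)) n
  have m2 := NTMain.phi_in_gdot P f hfin hP x n
  exact NTS.not_rApart_of_mem m1 m2 hn
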